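/- arXiv:1605.01041 — 8 statements merged into one kernel-verified Lean document; each statement's English description precedes it below -/
import Mathlib

section
/- The limiting essential spectrum of a sequence of closed densely defined operators (T_n) acting in closed subspaces H_n of a Hilbert space H_0 is a closed subset of the complex plane. -/
open Filter Topology

noncomputable section

variable {H₀ : Type} [NormedAddCommGroup H₀] [InnerProductSpace ℂ H₀] [CompleteSpace H₀]

/-- Weak convergence `x n ⇀ x₀` in the Hilbert space `H₀`. -/
def WeakTendsto (x : ℕ → H₀) (x₀ : H₀) : Prop :=
  ∀ y : H₀, Tendsto (fun n => (inner ℂ (x n - x₀) y : ℂ)) atTop (nhds 0)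

/-- `P` is the orthogonal projection of `H₀` onto the subspace `Hsp`. -/
def IsOrthProj (Hsp : Submodule ℂ H₀) (P : H₀ →L[ℂ] H₀) : Prop :=
  ∀ x : H₀, P x ∈ Hsp ∧ x - P x ∈ Hspᗮ

/-- The operator `T` with domain `dom` is densely defined in the subspace `Hsp` and maps its
domain into `Hsp`. -/
def ActsIn (Hsp dom : Submodule ℂ H₀) (T : H₀ →ₗ[ℂ] H₀) : Prop :=
  dom ≤ Hsp ∧ dom.topologicalClosure = Hsp ∧ ∀ x ∈ dom, T x ∈ Hsp

/-- The operator `T` with domain `dom` is closed. -/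
def IsClosedOp (dom : Submodule ℂ H₀) (T : H₀ →ₗ[ℂ] H₀) : Prop :=
  ∀ (x : ℕ → H₀) (u v : H₀), (∀ k, x k ∈ dom) →
    Tendsto x atTop (nhds u) → Tendsto (fun k => T (x k)) atTop (nhds v) →
    u ∈ dom ∧ T u = v

/-- `R` is the resolvent `(T - lam)⁻¹` of the operator `T` acting in `Hsp` with domain `dom`,
extended by `0` on the orthogonal complement of `Hsp`. -/
def InResolvent (Hsp dom : Submodule ℂ H₀) (T : H₀ →ₗ[ℂ] H₀) (lam : ℂ)
    (R : H₀ →L[ℂ] H₀) : Prop :=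
  (∀ y ∈ Hsp, R y ∈ dom ∧ T (R y) - lam • R y = y) ∧
  (∀ x ∈ dom, R (T x - lam • x) = x) ∧
  ∀ y ∈ Hspᗮ, R y = 0

/-- `lam` belongs to the resolvent set `ρ(T)`. -/
def InResolventSet (Hsp dom : Submodule ℂ H₀) (T : H₀ →ₗ[ℂ] H₀) (lam : ℂ) : Prop :=
  ∃ R : H₀ →L[ℂ] H₀, InResolvent Hsp dom T lam R

/-- `lam` belongs to the limiting essential spectrum of the sequence `(Tₙ)`. -/
def LimEssSpectrum (domn : ℕ → Submodule ℂ H₀) (Tn : ℕ → H₀ →ₗ[ℂ] H₀) (lam : ℂ) : Prop :=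
  ∃ (φ : ℕ → ℕ) (x : ℕ → H₀), StrictMono φ ∧ (∀ k, x k ∈ domn (φ k)) ∧
    (∀ k, ‖x k‖ = 1) ∧ WeakTendsto x 0 ∧
    Tendsto (fun k => ‖Tn (φ k) (x k) - lam • x k‖) atTop (nhds 0)

/-- `lam` belongs to the limiting essential `eps`-near spectrum of the sequence `(Tₙ)`. -/
def LimEssNear (domn : ℕ → Submodule ℂ H₀) (Tn : ℕ → H₀ →ₗ[ℂ] H₀) (eps : ℝ) (lam : ℂ) :
    Prop :=
  ∃ (φ : ℕ → ℕ) (x : ℕ → H₀), StrictMono φ ∧ (∀ k, x k ∈ domn (φ k)) ∧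
    (∀ k, ‖x k‖ = 1) ∧ WeakTendsto x 0 ∧
    Tendsto (fun k => ‖Tn (φ k) (x k) - lam • x k‖) atTop (nhds eps)

/-- `lam` belongs to the limiting approximate point spectrum of the sequence `(Tₙ)`. -/
def LimApproxSpectrum (domn : ℕ → Submodule ℂ H₀) (Tn : ℕ → H₀ →ₗ[ℂ] H₀) (lam : ℂ) : Prop :=
  ∃ (φ : ℕ → ℕ) (x : ℕ → H₀), StrictMono φ ∧ (∀ k, x k ∈ domn (φ k)) ∧
    (∀ k, ‖x k‖ = 1) ∧
    Tendsto (fun k => ‖Tn (φ k) (x k) - lam • x k‖) atTop (nhds 0)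

/-- `lam` belongs to the essential spectrum of `T`. -/
def EssSpectrum (dom : Submodule ℂ H₀) (T : H₀ →ₗ[ℂ] H₀) (lam : ℂ) : Prop :=
  ∃ x : ℕ → H₀, (∀ k, x k ∈ dom) ∧ (∀ k, ‖x k‖ = 1) ∧ WeakTendsto x 0 ∧
    Tendsto (fun k => ‖T (x k) - lam • x k‖) atTop (nhds 0)

/-- `lam` belongs to the essential `eps`-near spectrum of `T`. -/
def EssNear (dom : Submodule ℂ H₀) (T : H₀ →ₗ[ℂ] H₀) (eps : ℝ) (lam : ℂ) : Prop :=
  ∃ x : ℕ → H₀, (∀ k, x k ∈ dom) ∧ (∀ k, ‖x k‖ = 1) ∧ WeakTendsto x 0 ∧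
    Tendsto (fun k => ‖T (x k) - lam • x k‖) atTop (nhds eps)

/-- `lam` belongs to the approximate point spectrum of `T`. -/
def ApproxSpectrum (dom : Submodule ℂ H₀) (T : H₀ →ₗ[ℂ] H₀) (lam : ℂ) : Prop :=
  ∃ x : ℕ → H₀, (∀ k, x k ∈ dom) ∧ (∀ k, ‖x k‖ = 1) ∧
    Tendsto (fun k => ‖T (x k) - lam • x k‖) atTop (nhds 0)

/-- `lam` belongs to the point spectrum of `T`. -/
def PointSpectrum (dom : Submodule ℂ H₀) (T : H₀ →ₗ[ℂ] H₀) (lam : ℂ) : Prop :=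
  ∃ x ∈ dom, x ≠ 0 ∧ T x = lam • x

/-- `lam` belongs to the `eps`-approximate point spectrum of `T`. -/
def PseudoAppSpectrum (dom : Submodule ℂ H₀) (T : H₀ →ₗ[ℂ] H₀) (eps : ℝ) (lam : ℂ) : Prop :=
  ∃ x ∈ dom, ‖x‖ = 1 ∧ ‖T x - lam • x‖ < eps

/-- `lam` belongs to the spectrum of `T` acting in `Hsp`. -/
def InSpec (Hsp dom : Submodule ℂ H₀) (T : H₀ →ₗ[ℂ] H₀) (lam : ℂ) : Prop :=
  ¬ InResolventSet Hsp dom T lam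

/-- `lam` belongs to the `eps`-pseudospectrum of `T` acting in `Hsp`
(with the convention `‖(T-lam)⁻¹‖ = ∞` on the spectrum). -/
def InPseudoSpec (Hsp dom : Submodule ℂ H₀) (T : H₀ →ₗ[ℂ] H₀) (eps : ℝ) (lam : ℂ) : Prop :=
  (¬ InResolventSet Hsp dom T lam) ∨
    ∃ R : H₀ →L[ℂ] H₀, InResolvent Hsp dom T lam R ∧ 1 / eps < ‖R‖

/-- Generalised strong resolvent convergence `Tₙ → T`. -/
def GSRConv (Hsp dom : Submodule ℂ H₀) (T : H₀ →ₗ[ℂ] H₀)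
    (Hn domn : ℕ → Submodule ℂ H₀) (Tn : ℕ → H₀ →ₗ[ℂ] H₀) : Prop :=
  ∃ (n₀ : ℕ) (lam₀ : ℂ) (R : H₀ →L[ℂ] H₀) (Rn : ℕ → H₀ →L[ℂ] H₀),
    InResolvent Hsp dom T lam₀ R ∧
    (∀ n, n ≥ n₀ → InResolvent (Hn n) (domn n) (Tn n) lam₀ (Rn n)) ∧
    ∀ y : H₀, Tendsto (fun n => Rn n y) atTop (nhds (R y))

/-- Generalised norm resolvent convergence `Tₙ → T`. -/
def GNRConv (Hsp dom : Submodule ℂ H₀) (T : H₀ →ₗ[ℂ] H₀)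
    (Hn domn : ℕ → Submodule ℂ H₀) (Tn : ℕ → H₀ →ₗ[ℂ] H₀) : Prop :=
  ∃ (n₀ : ℕ) (lam₀ : ℂ) (R : H₀ →L[ℂ] H₀) (Rn : ℕ → H₀ →L[ℂ] H₀),
    InResolvent Hsp dom T lam₀ R ∧
    (∀ n, n ≥ n₀ → InResolvent (Hn n) (domn n) (Tn n) lam₀ (Rn n)) ∧
    Tendsto (fun n => ‖Rn n - R‖) atTop (nhds 0)

/-- The sequence of bounded operators `(Bₙ)`, `Bₙ ∈ L(Hₙ)`, is discretely compact: images of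
bounded sequences `xₙ ∈ Hₙ` have subsequences converging in norm to an element of `Hsp`. -/
def DiscretelyCompact (Hsp : Submodule ℂ H₀) (Hn : ℕ → Submodule ℂ H₀)
    (B : ℕ → H₀ →L[ℂ] H₀) : Prop :=
  ∀ (φ : ℕ → ℕ) (x : ℕ → H₀), StrictMono φ → (∀ k, x k ∈ Hn (φ k)) →
    (∃ C : ℝ, ∀ k, ‖x k‖ ≤ C) →
    ∃ (ψ : ℕ → ℕ) (z : H₀), StrictMono ψ ∧ z ∈ Hsp ∧
      Tendsto (fun k => B (φ (ψ k)) (x (ψ k))) atTop (nhds z)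

/-- `S` with domain `domS` is the Hilbert-space adjoint of the densely defined operator `T`
acting in `Hsp` with domain `dom`. -/
def IsAdjointOp (Hsp dom : Submodule ℂ H₀) (T : H₀ →ₗ[ℂ] H₀)
    (domS : Submodule ℂ H₀) (S : H₀ →ₗ[ℂ] H₀) : Prop :=
  domS ≤ Hsp ∧ ∀ y ∈ Hsp, ∀ z ∈ Hsp,
    ((y ∈ domS ∧ S y = z) ↔ ∀ x ∈ dom, (inner ℂ (T x) y : ℂ) = inner ℂ x z)

/-- The sequence of bounded operators `(Aₙ)` converges strongly. -/
def StrongConvSeq (A : ℕ → H₀ →L[ℂ] H₀) : Prop :=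
  ∃ A₀ : H₀ →L[ℂ] H₀, ∀ y : H₀, Tendsto (fun n => A n y) atTop (nhds (A₀ y))

/-- `lam` belongs to the region of boundedness `Δ_b((Tₙ))`. -/
def InRegionOfBoundedness (Hn domn : ℕ → Submodule ℂ H₀) (Tn : ℕ → H₀ →ₗ[ℂ] H₀)
    (lam : ℂ) : Prop :=
  ∃ (n₀ : ℕ) (C : ℝ) (Rn : ℕ → H₀ →L[ℂ] H₀),
    ∀ n, n ≥ n₀ → InResolvent (Hn n) (domn n) (Tn n) lam (Rn n) ∧ ‖Rn n‖ ≤ C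


/-- Weak convergence to 0 can be tested on a dense range, for norm-bounded sequences. -/
lemma weak_of_dense (x : ℕ → H₀) (hx : ∀ k, ‖x k‖ ≤ 1) (u : ℕ → H₀) (hu : DenseRange u)
    (h : ∀ i, Tendsto (fun k => (inner ℂ (x k) (u i) : ℂ)) atTop (nhds 0)) :
    ∀ y : H₀, Tendsto (fun k => (inner ℂ (x k) y : ℂ)) atTop (nhds 0) := by
  intro y
  rw [NormedAddCommGroup.tendsto_nhds_zero]
  intro ε hε
  obtain ⟨i, hi⟩ := Metric.denseRange_iff.mp hu y (ε/2) (by positivity)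
  have h1 : ∀ᶠ k in atTop, ‖(inner ℂ (x k) (u i) : ℂ)‖ < ε/2 := by
    have hn := tendsto_zero_iff_norm_tendsto_zero.mp (h i)
    exact hn.eventually (eventually_lt_nhds (show (0:ℝ) < ε/2 by positivity))
  filter_upwards [h1] with k hk
  have : (inner ℂ (x k) y : ℂ) = inner ℂ (x k) (u i) + inner ℂ (x k) (y - u i) := by
    rw [← inner_add_right]; congr 1; abel
  calc ‖(inner ℂ (x k) y : ℂ)‖ ≤ ‖(inner ℂ (x k) (u i) : ℂ)‖ + ‖(inner ℂ (x k) (y - u i) : ℂ)‖ := by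
        rw [this]; exact norm_add_le _ _
    _ < ε/2 + ε/2 := by
        apply add_lt_add_of_lt_of_le hk
        calc ‖(inner ℂ (x k) (y - u i) : ℂ)‖ ≤ ‖x k‖ * ‖y - u i‖ := norm_inner_le_norm _ _
          _ ≤ 1 * ‖y - u i‖ := by gcongr; exact hx k
          _ ≤ ε/2 := by rw [one_mul, ← dist_eq_norm]; exact hi.le
    _ = ε := by ring

theorem stmt0 [TopologicalSpace.SeparableSpace H₀]
    (Hn domn : ℕ → Submodule ℂ H₀) (Tn : ℕ → H₀ →ₗ[ℂ] H₀)
    (hHncl : ∀ n, IsClosed ((Hn n : Set H₀)))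
    (hTn : ∀ n, ActsIn (Hn n) (domn n) (Tn n))
    (hTncl : ∀ n, IsClosedOp (domn n) (Tn n))
 :
    IsClosed {lam : ℂ | LimEssSpectrum domn Tn lam} := by
  apply IsSeqClosed.isClosed
  intro lam lam₀ hS hlim
  obtain ⟨u, hu⟩ := TopologicalSpace.exists_dense_seq H₀
  choose φs xs hmono hdom hnorm hweak htend using hS
  -- for each j and m, find a good index k
  have hP : ∀ j m : ℕ, ∃ k, m < φs j k ∧
      ‖Tn (φs j k) (xs j k) - lam j • xs j k‖ < 1/(j+1) ∧
      ∀ i ∈ Finset.range (j+1), ‖(inner ℂ (xs j k) (u i) : ℂ)‖ < 1/(j+1) := by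
    intro j m
    have hpos : (0:ℝ) < 1/(j+1) := by positivity
    have e1 : ∀ᶠ k in atTop, m < φs j k :=
      eventually_atTop.mpr ⟨m+1, fun k hk => lt_of_lt_of_le (Nat.lt_of_succ_le hk)
        ((hmono j).le_apply)⟩
    have e2 : ∀ᶠ k in atTop, ‖Tn (φs j k) (xs j k) - lam j • xs j k‖ < 1/(j+1) :=
      (htend j).eventually (eventually_lt_nhds hpos)
    have e3 : ∀ᶠ k in atTop, ∀ i ∈ Finset.range (j+1),
        ‖(inner ℂ (xs j k) (u i) : ℂ)‖ < 1/(j+1) := by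
      rw [eventually_all_finset]
      intro i _
      have hw := hweak j (u i)
      simp only [sub_zero] at hw
      exact (tendsto_zero_iff_norm_tendsto_zero.mp hw).eventually (eventually_lt_nhds hpos)
    exact ((e1.and e2).and e3).exists.imp (fun k hk => ⟨hk.1.1, hk.1.2, hk.2⟩)
  choose f hf1 hf2 hf3 using hP
  -- recursive choice of indices
  set K : ℕ → ℕ := fun j => Nat.rec (f 0 0) (fun j kj => f (j+1) (φs j kj)) j with hK
  have hKsucc : ∀ j, K (j+1) = f (j+1) (φs j (K j)) := fun j => rfl
  have hK2 : ∀ j, ‖Tn (φs j (K j)) (xs j (K j)) - lam j • xs j (K j)‖ < 1/(j+1) ∧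
      ∀ i ∈ Finset.range (j+1), ‖(inner ℂ (xs j (K j)) (u i) : ℂ)‖ < 1/(j+1) := by
    intro j
    cases j with
    | zero => exact ⟨hf2 0 0, hf3 0 0⟩
    | succ j => rw [hKsucc]; exact ⟨hf2 _ _, hf3 _ _⟩
  set ψ : ℕ → ℕ := fun j => φs j (K j) with hψ
  set z : ℕ → H₀ := fun j => xs j (K j) with hz
  refine ⟨ψ, z, ?_, fun j => hdom j (K j), fun j => hnorm j (K j), ?_, ?_⟩
  · apply strictMono_nat_of_lt_succ
    intro j
    have := hf1 (j+1) (φs j (K j))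
    rw [← hKsucc j] at this
    exact this
  · -- weak convergence to 0
    intro y
    simp only [sub_zero]
    refine weak_of_dense z (fun k => le_of_eq (hnorm k (K k))) u hu ?_ y
    intro i
    rw [tendsto_zero_iff_norm_tendsto_zero]
    refine squeeze_zero' (g := fun j : ℕ => 1/((j:ℝ)+1))
      (Eventually.of_forall fun k => norm_nonneg _) ?_
      tendsto_one_div_add_atTop_nhds_zero_nat
    filter_upwards [eventually_ge_atTop i] with j hj
    exact le_of_lt ((hK2 j).2 i (Finset.mem_range.mpr (Nat.lt_succ_of_le hj)))
  · -- norm convergence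
    refine squeeze_zero' (g := fun j : ℕ => 1/((j:ℝ)+1) + ‖lam j - lam₀‖)
      (Eventually.of_forall fun k => norm_nonneg _) ?_ ?_
    · refine Eventually.of_forall fun j => ?_
      have key : Tn (ψ j) (z j) - lam₀ • z j =
          (Tn (ψ j) (z j) - lam j • z j) + (lam j - lam₀) • z j := by
        rw [sub_smul]; abel
      calc ‖Tn (ψ j) (z j) - lam₀ • z j‖
          ≤ ‖Tn (ψ j) (z j) - lam j • z j‖ + ‖(lam j - lam₀) • z j‖ := by
            rw [key]; exact norm_add_le _ _
        _ ≤ 1/(j+1) + ‖lam j - lam₀‖ := by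
            apply add_le_add (le_of_lt (hK2 j).1)
            rw [norm_smul, hnorm j (K j), mul_one]
    · have h1 : Tendsto (fun j : ℕ => ‖lam j - lam₀‖) atTop (nhds 0) := by
        rw [← tendsto_zero_iff_norm_tendsto_zero] at *
        exact tendsto_sub_nhds_zero_iff.mpr hlim
      simpa using tendsto_one_div_add_atTop_nhds_zero_nat.add h1

end
end

section
/- Let λ_0 ∈ ⋂_n ρ(T_n) and λ ≠ λ_0. Then λ belongs to the limiting essential spectrum of (T_n) if and only if (λ − λ_0)^{-1} belongs to the limiting essential spectrum of the sequence of resolvents ((T_n − λ_0)^{-1}). -/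
open Filter Topology

noncomputable section

variable {H₀ : Type} [NormedAddCommGroup H₀] [InnerProductSpace ℂ H₀] [CompleteSpace H₀]

/-- If `y k = a • x k + o(1)` with `x k` unit vectors weakly null, then `‖y k‖ → ‖a‖` and
`y` is weakly null. -/
lemma aux_shape (x y : ℕ → H₀) (a : ℂ) (hx1 : ∀ k, ‖x k‖ = 1)
    (hweak : WeakTendsto x 0)
    (he : Tendsto (fun k => ‖y k - a • x k‖) atTop (nhds 0)) :
    Tendsto (fun k => ‖y k‖) atTop (nhds ‖a‖) ∧ WeakTendsto y 0 := by
  constructor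
  · have h1 : Tendsto (fun k => ‖y k‖ - ‖a‖) atTop (nhds 0) := by
      refine squeeze_zero_norm (fun k => ?_) he
      have : ‖a • x k‖ = ‖a‖ := by rw [norm_smul, hx1 k, mul_one]
      calc ‖‖y k‖ - ‖a‖‖ = |‖y k‖ - ‖a • x k‖| := by rw [this]; rfl
        _ ≤ ‖y k - a • x k‖ := abs_norm_sub_norm_le _ _
    have := h1.add_const ‖a‖
    simpa using this
  · intro w
    have h1 : Tendsto (fun k => (inner ℂ (y k - a • x k) w : ℂ)) atTop (nhds 0) := by
      exact squeeze_zero_norm (fun k => norm_inner_le_norm _ _) (by simpa using he.mul_const ‖w‖)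
    have h2 : Tendsto (fun k => ((starRingEnd ℂ) a) * (inner ℂ (x k) w : ℂ)) atTop (nhds 0) := by
      have := hweak w
      simp only [sub_zero] at this
      simpa using this.const_mul ((starRingEnd ℂ) a)
    have := h1.add h2
    simp only [add_zero] at this
    refine this.congr fun k => ?_
    rw [sub_zero, inner_sub_left, inner_smul_left]
    ring

/-- Normalizing a sequence whose norms tend to a positive limit. -/
lemma aux_normalize (domn : ℕ → Submodule ℂ H₀) (Sn : ℕ → H₀ →ₗ[ℂ] H₀) (μ : ℂ)
    (φ : ℕ → ℕ) (y : ℕ → H₀) (c : ℝ) (hc : 0 < c)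
    (hφ : StrictMono φ) (hmem : ∀ k, y k ∈ domn (φ k))
    (hnorm : Tendsto (fun k => ‖y k‖) atTop (nhds c))
    (hweak : WeakTendsto y 0)
    (hS : Tendsto (fun k => ‖Sn (φ k) (y k) - μ • y k‖) atTop (nhds 0)) :
    LimEssSpectrum domn Sn μ := by
  obtain ⟨N, hN⟩ := (hnorm.eventually (eventually_gt_nhds (by linarith : c / 2 < c))).exists_forall_of_atTop
  have hpos : ∀ k, (0:ℝ) < ‖y (k + N)‖ := fun k => lt_trans (by linarith) (hN _ (Nat.le_add_left N k))
  have hbd : ∀ k, (‖y (k + N)‖)⁻¹ ≤ 2 / c := by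
    intro k
    rw [inv_le_comm₀ (hpos k) (by positivity)]
    have := hN (k + N) (Nat.le_add_left N k)
    calc (2/c)⁻¹ = c/2 := by field_simp
      _ ≤ ‖y (k + N)‖ := le_of_lt this
  refine ⟨fun k => φ (k + N), fun k => ((‖y (k + N)‖ : ℂ))⁻¹ • y (k + N),
    hφ.comp (strictMono_id.add_const N), fun k => Submodule.smul_mem _ _ (hmem _), fun k => ?_,
    fun w => ?_, ?_⟩
  · rw [norm_smul, norm_inv, Complex.norm_real, Real.norm_eq_abs,
      abs_of_pos (hpos k), inv_mul_cancel₀ (ne_of_gt (hpos k))]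
  · refine squeeze_zero_norm (fun k => ?_) (a := fun k => (2/c) * ‖(inner ℂ (y (k+N)) w : ℂ)‖) ?_
    · rw [sub_zero, inner_smul_left, norm_mul]
      refine mul_le_mul_of_nonneg_right ?_ (norm_nonneg _)
      rw [RCLike.norm_conj, norm_inv, Complex.norm_real, Real.norm_eq_abs,
        abs_of_pos (hpos k)]
      exact hbd k
    · have h0 : Tendsto (fun k => (inner ℂ (y (k+N)) w : ℂ)) atTop (nhds 0) := by
        have := (hweak w).comp (tendsto_add_atTop_nat N)
        simpa [Function.comp_def] using this
      simpa using (h0.norm.const_mul (2/c))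
  · refine squeeze_zero_norm (fun k => ?_)
      (a := fun k => (2/c) * ‖Sn (φ (k+N)) (y (k+N)) - μ • y (k+N)‖) ?_
    · have : Sn (φ (k+N)) (((‖y (k + N)‖ : ℂ))⁻¹ • y (k + N)) - μ • ((‖y (k + N)‖ : ℂ))⁻¹ • y (k + N)
          = ((‖y (k + N)‖ : ℂ))⁻¹ • (Sn (φ (k+N)) (y (k+N)) - μ • y (k+N)) := by
        rw [map_smul, smul_sub, smul_comm]
      rw [norm_norm, this, norm_smul, norm_inv, Complex.norm_real, Real.norm_eq_abs,
        abs_of_pos (hpos k)]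
      exact mul_le_mul_of_nonneg_right (hbd k) (norm_nonneg _)
    · have := hS.comp (tendsto_add_atTop_nat N)
      simpa using this.const_mul (2/c)


theorem stmt1 [TopologicalSpace.SeparableSpace H₀]
    (Hn domn : ℕ → Submodule ℂ H₀) (Tn : ℕ → H₀ →ₗ[ℂ] H₀)
    (hHncl : ∀ n, IsClosed ((Hn n : Set H₀)))
    (hTn : ∀ n, ActsIn (Hn n) (domn n) (Tn n))
    (hTncl : ∀ n, IsClosedOp (domn n) (Tn n))
    (lam₀ lam : ℂ) (Rn : ℕ → H₀ →L[ℂ] H₀)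
    (hres : ∀ n, InResolvent (Hn n) (domn n) (Tn n) lam₀ (Rn n))
    (hne : lam ≠ lam₀) :
    LimEssSpectrum domn Tn lam ↔
      LimEssSpectrum Hn (fun n => (Rn n : H₀ →ₗ[ℂ] H₀)) ((lam - lam₀)⁻¹) := by
  have ha : lam - lam₀ ≠ 0 := sub_ne_zero.mpr hne
  constructor
  · rintro ⟨φ, x, hφ, hmem, h1, hw, hT⟩
    set y : ℕ → H₀ := fun k => Tn (φ k) (x k) - lam₀ • x k with hy
    have hid : ∀ k, y k - (lam - lam₀) • x k = Tn (φ k) (x k) - lam • x k := by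
      intro k; simp only [hy]; module
    have he : Tendsto (fun k => ‖y k - (lam - lam₀) • x k‖) atTop (nhds 0) := by
      simpa only [hid] using hT
    obtain ⟨hnormy, hwy⟩ := aux_shape x y (lam - lam₀) h1 hw he
    refine aux_normalize Hn (fun n => (Rn n : H₀ →ₗ[ℂ] H₀)) _ φ y ‖lam - lam₀‖
      (norm_pos_iff.mpr ha) hφ (fun k => ?_) hnormy hwy ?_
    · exact Submodule.sub_mem _ ((hTn (φ k)).2.2 _ (hmem k))
        (Submodule.smul_mem _ _ ((hTn (φ k)).1 (hmem k)))
    · have hRx : ∀ k, Rn (φ k) (y k) = x k := fun k => (hres (φ k)).2.1 _ (hmem k)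
      have hid2 : ∀ k, (Rn (φ k) : H₀ →ₗ[ℂ] H₀) (y k) - (lam - lam₀)⁻¹ • y k
          = -((lam - lam₀)⁻¹ • (y k - (lam - lam₀) • x k)) := by
        intro k
        rw [ContinuousLinearMap.coe_coe, hRx k]
        conv_rhs => rw [smul_sub, smul_smul, inv_mul_cancel₀ ha, one_smul]
        abel
      have h2 : Tendsto (fun k => ‖(lam - lam₀)⁻¹‖ * ‖y k - (lam - lam₀) • x k‖)
          atTop (nhds 0) := by simpa using he.const_mul ‖(lam - lam₀)⁻¹‖
      refine h2.congr fun k => ?_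
      rw [hid2 k, norm_neg, norm_smul]
  · rintro ⟨φ, v, hφ, hmem, h1, hw, hT⟩
    have hμ : (lam - lam₀)⁻¹ ≠ 0 := inv_ne_zero ha
    set y : ℕ → H₀ := fun k => Rn (φ k) (v k) with hy
    have he : Tendsto (fun k => ‖y k - (lam - lam₀)⁻¹ • v k‖) atTop (nhds 0) := by
      simpa only [hy, ContinuousLinearMap.coe_coe] using hT
    obtain ⟨hnormy, hwy⟩ := aux_shape v y _ h1 hw he
    refine aux_normalize domn Tn lam φ y ‖(lam - lam₀)⁻¹‖ (norm_pos_iff.mpr hμ) hφ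
      (fun k => ((hres (φ k)).1 _ (hmem k)).1) hnormy hwy ?_
    have hTy : ∀ k, Tn (φ k) (y k) - lam₀ • y k = v k :=
      fun k => ((hres (φ k)).1 _ (hmem k)).2
    have hid2 : ∀ k, Tn (φ k) (y k) - lam • y k
        = -((lam - lam₀) • (y k - (lam - lam₀)⁻¹ • v k)) := by
      intro k
      rw [sub_eq_iff_eq_add.mp (hTy k)]
      conv_rhs => rw [smul_sub, smul_smul, mul_inv_cancel₀ ha, one_smul]
      module
    have h2 : Tendsto (fun k => ‖lam - lam₀‖ * ‖y k - (lam - lam₀)⁻¹ • v k‖)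
        atTop (nhds 0) := by simpa using he.const_mul ‖lam - lam₀‖
    refine h2.congr fun k => ?_
    rw [hid2 k, norm_neg, norm_smul]


end
end

section
/- If T_n converges to T in generalised strong resolvent sense, then the essential spectrum of T is contained in the limiting essential spectrum of the sequence (T_n). -/
open Filter Topology

noncomputable section

variable {H₀ : Type} [NormedAddCommGroup H₀] [InnerProductSpace ℂ H₀] [CompleteSpace H₀]

theorem stmt2 [TopologicalSpace.SeparableSpace H₀]
    (Hsp dom : Submodule ℂ H₀) (T : H₀ →ₗ[ℂ] H₀)
    (hHcl : IsClosed ((Hsp : Set H₀)))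
    (hT : ActsIn Hsp dom T) (hTcl : IsClosedOp dom T)
    (Hn domn : ℕ → Submodule ℂ H₀) (Tn : ℕ → H₀ →ₗ[ℂ] H₀)
    (hHncl : ∀ n, IsClosed ((Hn n : Set H₀)))
    (hTn : ∀ n, ActsIn (Hn n) (domn n) (Tn n))
    (hTncl : ∀ n, IsClosedOp (domn n) (Tn n))
    (P : H₀ →L[ℂ] H₀) (Pn : ℕ → H₀ →L[ℂ] H₀)
    (hP : IsOrthProj Hsp P) (hPn : ∀ n, IsOrthProj (Hn n) (Pn n))
    (hPconv : ∀ y : H₀, Tendsto (fun n => Pn n y) atTop (nhds (P y)))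
    (hconv : GSRConv Hsp dom T Hn domn Tn) (lam : ℂ)
    (hlam : EssSpectrum dom T lam) :
    LimEssSpectrum domn Tn lam := by
  obtain ⟨n₀, lam₀, R, Rn, hR, hRn, hRconv⟩ := hconv
  obtain ⟨x, hxdom, hxnorm, hxweak, hxT⟩ := hlam
  set y : ℕ → H₀ := fun k => T (x k) - lam₀ • x k with hy
  have hyk : ∀ k, y k = T (x k) - lam₀ • x k := fun k => rfl
  have hRy : ∀ k, R (y k) = x k := fun k => hR.2.1 (x k) (hxdom k)
  have hyH : ∀ k, y k ∈ Hsp := fun k =>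
    Submodule.sub_mem _ (hT.2.2 (x k) (hxdom k)) (Submodule.smul_mem _ _ (hT.1 (hxdom k)))
  have hPy : ∀ k, P (y k) = y k := by
    intro k
    obtain ⟨h1, h2⟩ := hP (y k)
    have hmem : y k - P (y k) ∈ Hsp := Submodule.sub_mem _ (hyH k) h1
    have hz : (inner ℂ (y k - P (y k)) (y k - P (y k)) : ℂ) = 0 :=
      (Submodule.mem_orthogonal _ _).1 h2 _ hmem
    have h0 : y k - P (y k) = 0 := inner_self_eq_zero.mp hz
    have := sub_eq_zero.mp h0
    exact this.symm
  have hkey : ∀ n, n ≥ n₀ → ∀ w : H₀, Rn n w ∈ domn n ∧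
      Tn n (Rn n w) - lam₀ • Rn n w = Pn n w := by
    intro n hn w
    obtain ⟨h1, h2⟩ := hPn n w
    have hz : Rn n (w - Pn n w) = 0 := (hRn n hn).2.2 _ h2
    have heq : Rn n w = Rn n (Pn n w) := by
      have h3 : Rn n w - Rn n (Pn n w) = 0 := by rw [← map_sub]; exact hz
      exact sub_eq_zero.mp h3
    obtain ⟨ha, hb⟩ := (hRn n hn).1 (Pn n w) h1
    rw [heq]; exact ⟨ha, hb⟩
  -- selection of indices
  have hsel : ∀ k : ℕ, ∃ N : ℕ, ∀ n ≥ N,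
      ‖Rn n (y k) - x k‖ < 1 / (k + 1) ∧ ‖Pn n (y k) - y k‖ < 1 / (k + 1) := by
    intro k
    have hpos : (0 : ℝ) < 1 / (k + 1) := by positivity
    have h1 : Tendsto (fun n => ‖Rn n (y k) - x k‖) atTop (nhds 0) := by
      have h := hRconv (y k)
      rw [hRy k] at h
      exact tendsto_iff_norm_sub_tendsto_zero.mp h
    have h2 : Tendsto (fun n => ‖Pn n (y k) - y k‖) atTop (nhds 0) := by
      have h := hPconv (y k)
      rw [hPy k] at h
      exact tendsto_iff_norm_sub_tendsto_zero.mp h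
    have e1 := h1.eventually (gt_mem_nhds hpos)
    have e2 := h2.eventually (gt_mem_nhds hpos)
    exact eventually_atTop.mp (e1.and e2)
  choose g hg using hsel
  set φ : ℕ → ℕ := fun k =>
    Nat.rec (max (g 0) n₀) (fun k ih => max (g (k + 1)) (max n₀ (ih + 1))) k with hφ
  have hφsucc : ∀ k, φ (k + 1) = max (g (k + 1)) (max n₀ (φ k + 1)) := fun k => rfl
  have hφmono : StrictMono φ := strictMono_nat_of_lt_succ (fun k => by
    rw [hφsucc]
    exact lt_of_lt_of_le (Nat.lt_succ_self _)
      ((le_max_right _ _).trans (le_max_right _ _)))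
  have hφg : ∀ k, g k ≤ φ k := by
    intro k
    cases k with
    | zero => exact le_max_left _ _
    | succ k => exact le_max_left _ _
  have hφn₀ : ∀ k, n₀ ≤ φ k := by
    intro k
    cases k with
    | zero => exact le_max_right _ _
    | succ k => exact (le_max_left _ _).trans (le_max_right _ _)
  set z : ℕ → H₀ := fun k => Rn (φ k) (y k) with hzdef
  have hok : ∀ k, ‖z k - x k‖ < 1 / (k + 1) ∧ ‖Pn (φ k) (y k) - y k‖ < 1 / (k + 1) :=
    fun k => hg k (φ k) (hφg k)
  have hzmem : ∀ k, z k ∈ domn (φ k) := fun k => (hkey (φ k) (hφn₀ k) (y k)).1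
  have hzT : ∀ k, Tn (φ k) (z k) - lam₀ • z k = Pn (φ k) (y k) :=
    fun k => (hkey (φ k) (hφn₀ k) (y k)).2
  have hone : Tendsto (fun k : ℕ => 1 / ((k : ℝ) + 1)) atTop (nhds 0) :=
    tendsto_one_div_add_atTop_nhds_zero_nat
  have hzx0 : Tendsto (fun k => ‖z k - x k‖) atTop (nhds 0) :=
    squeeze_zero (fun k => norm_nonneg _) (fun k => (hok k).1.le) hone
  have hznorm : Tendsto (fun k => ‖z k‖) atTop (nhds 1) := by
    rw [tendsto_iff_dist_tendsto_zero]
    refine squeeze_zero (fun k => dist_nonneg) (fun k => ?_) hzx0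
    rw [Real.dist_eq]
    calc |‖z k‖ - 1| = |‖z k‖ - ‖x k‖| := by rw [hxnorm k]
      _ ≤ ‖z k - x k‖ := abs_norm_sub_norm_le _ _
  have hzpos : ∀ k, 0 < ‖z k‖ := by
    intro k
    have h1 : ‖z k - x k‖ < 1 / (k + 1) := (hok k).1
    have h2 : (1 : ℝ) / (k + 1) ≤ 1 := by
      rw [div_le_one (by positivity)]
      have : (0 : ℝ) ≤ (k : ℝ) := Nat.cast_nonneg k
      linarith
    have h3 : ‖x k‖ - ‖z k‖ ≤ ‖x k - z k‖ := norm_sub_norm_le _ _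
    rw [norm_sub_rev, hxnorm k] at h3
    linarith
  set u : ℕ → H₀ := fun k => ((‖z k‖⁻¹ : ℝ) : ℂ) • z k with hudef
  have hcnorm : ∀ k, ‖((‖z k‖⁻¹ : ℝ) : ℂ)‖ = ‖z k‖⁻¹ := by
    intro k
    rw [Complex.norm_real, Real.norm_eq_abs, abs_inv, abs_norm]
  have hunorm : ∀ k, ‖u k‖ = 1 := by
    intro k
    rw [hudef]
    simp only []
    rw [norm_smul, hcnorm k, inv_mul_cancel₀ (hzpos k).ne']
  have humem : ∀ k, u k ∈ domn (φ k) := fun k => Submodule.smul_mem _ _ (hzmem k)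
  have huT : ∀ k, Tn (φ k) (u k) - lam • u k
      = ((‖z k‖⁻¹ : ℝ) : ℂ) • (Tn (φ k) (z k) - lam • z k) := by
    intro k
    rw [hudef]
    simp only [map_smul, smul_sub, smul_comm lam]
  have hTzbound : ∀ k, ‖Tn (φ k) (z k) - lam • z k‖
      ≤ (1 + ‖lam₀ - lam‖) * (1 / (k + 1)) + ‖T (x k) - lam • x k‖ := by
    intro k
    have hrev : Tn (φ k) (z k) - lam • z k
        = (Pn (φ k) (y k) - y k) + (lam₀ - lam) • (z k - x k) + (T (x k) - lam • x k) := by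
      have hz1 : Tn (φ k) (z k) = Pn (φ k) (y k) + lam₀ • z k := by
        have := hzT k
        rw [← this]; abel
      rw [hz1, hyk k]
      module
    rw [hrev]
    have hb1 : ‖Pn (φ k) (y k) - y k‖ ≤ 1 / (k + 1) := (hok k).2.le
    have hb2 : ‖(lam₀ - lam) • (z k - x k)‖ ≤ ‖lam₀ - lam‖ * (1 / (k + 1)) := by
      rw [norm_smul]
      exact mul_le_mul_of_nonneg_left (hok k).1.le (norm_nonneg _)
    calc ‖(Pn (φ k) (y k) - y k) + (lam₀ - lam) • (z k - x k) + (T (x k) - lam • x k)‖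
        ≤ ‖Pn (φ k) (y k) - y k‖ + ‖(lam₀ - lam) • (z k - x k)‖ + ‖T (x k) - lam • x k‖ :=
          norm_add₃_le
      _ ≤ (1 + ‖lam₀ - lam‖) * (1 / (k + 1)) + ‖T (x k) - lam • x k‖ := by nlinarith
  have haux : Tendsto (fun k : ℕ => (1 + ‖lam₀ - lam‖) * (1 / ((k : ℝ) + 1))
      + ‖T (x k) - lam • x k‖) atTop (nhds 0) := by
    have h1 := hone.const_mul (1 + ‖lam₀ - lam‖)
    have h2 := h1.add hxT
    simpa using h2
  have hTz0 : Tendsto (fun k => ‖Tn (φ k) (z k) - lam • z k‖) atTop (nhds 0) :=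
    squeeze_zero (fun k => norm_nonneg _) hTzbound haux
  have hinv : Tendsto (fun k => ‖z k‖⁻¹) atTop (nhds 1) := by
    have := hznorm.inv₀ one_ne_zero
    simpa using this
  have huT0 : Tendsto (fun k => ‖Tn (φ k) (u k) - lam • u k‖) atTop (nhds 0) := by
    have h := hinv.mul hTz0
    rw [mul_zero] at h
    refine h.congr (fun k => ?_)
    rw [huT k, norm_smul, hcnorm k]
  have huweak : WeakTendsto u 0 := by
    intro w
    have h1 : Tendsto (fun k => (inner ℂ (z k - x k) w : ℂ)) atTop (nhds 0) := by
      rw [tendsto_zero_iff_norm_tendsto_zero]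
      refine squeeze_zero (fun k => norm_nonneg _)
        (fun k => norm_inner_le_norm _ _) (by simpa using hzx0.mul_const ‖w‖)
    have h2 : Tendsto (fun k => (inner ℂ (x k) w : ℂ)) atTop (nhds 0) := by
      have := hxweak w
      simpa using this
    have hzw : Tendsto (fun k => (inner ℂ (z k) w : ℂ)) atTop (nhds 0) := by
      have h3 := h2.add h1
      rw [add_zero] at h3
      refine h3.congr (fun k => ?_)
      rw [← inner_add_left]
      congr 1
      abel
    have hinvC : Tendsto (fun k => ((‖z k‖⁻¹ : ℝ) : ℂ)) atTop (nhds 1) := by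
      have h4 := (Complex.continuous_ofReal.tendsto 1).comp hinv
      simpa [Function.comp_def, Complex.ofReal_inv] using h4
    have h5 := hinvC.mul hzw
    rw [mul_zero] at h5
    refine h5.congr (fun k => ?_)
    rw [sub_zero, hudef]
    simp only []
    rw [inner_smul_left, Complex.conj_ofReal]
  exact ⟨φ, u, hφmono, humem, hunorm, huweak, huT0⟩

end
end

section
/- If T_n converges to T in generalised norm resolvent sense, then the limiting essential spectrum of (T_n) equals the essential spectrum of T. -/
open Filter Topology

noncomputable section

variable {H₀ : Type} [NormedAddCommGroup H₀] [InnerProductSpace ℂ H₀] [CompleteSpace H₀]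

set_option linter.unusedSectionVars false

lemma orthProj_eq_self {Hsp : Submodule ℂ H₀} {P : H₀ →L[ℂ] H₀}
    (hP : IsOrthProj Hsp P) {y : H₀} (hy : y ∈ Hsp) : P y = y := by
  have h2 := (hP y).2
  have hmem : y - P y ∈ Hsp := Hsp.sub_mem hy (hP y).1
  have h0 : (inner ℂ (y - P y) (y - P y) : ℂ) = 0 :=
    (Submodule.mem_orthogonal Hsp _).1 h2 _ hmem
  exact (sub_eq_zero.1 (inner_self_eq_zero.1 h0)).symm

lemma orthProj_norm_le {Hsp : Submodule ℂ H₀} {P : H₀ →L[ℂ] H₀}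
    (hP : IsOrthProj Hsp P) (x : H₀) : ‖P x‖ ≤ ‖x‖ := by
  have h0 : (inner ℂ (P x) (x - P x) : ℂ) = 0 :=
    (Submodule.mem_orthogonal Hsp _).1 (hP x).2 _ (hP x).1
  have h1 : (inner ℂ (P x) x : ℂ) = inner ℂ (P x) (P x) := by
    rw [inner_sub_right] at h0
    exact sub_eq_zero.1 h0
  have h2 : ‖P x‖ ^ 2 ≤ ‖P x‖ * ‖x‖ := by
    calc ‖P x‖ ^ 2 = ‖(inner ℂ (P x) (P x) : ℂ)‖ := by
          rw [inner_self_eq_norm_sq_to_K]; simp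
      _ = ‖(inner ℂ (P x) x : ℂ)‖ := by rw [h1]
      _ ≤ ‖P x‖ * ‖x‖ := norm_inner_le_norm _ _
  nlinarith [norm_nonneg (P x), norm_nonneg x]

lemma weakTendsto_clm (R : H₀ →L[ℂ] H₀) {x : ℕ → H₀} (hx : WeakTendsto x 0) :
    WeakTendsto (fun k => R (x k)) 0 := by
  intro y
  have h := hx ((ContinuousLinearMap.adjoint R) y)
  simp only [sub_zero] at h ⊢
  have heq : (fun k => (inner ℂ (R (x k)) y : ℂ))
      = fun k => (inner ℂ (x k) ((ContinuousLinearMap.adjoint R) y) : ℂ) := by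
    funext k; rw [ContinuousLinearMap.adjoint_inner_right]
  rw [heq]; exact h

lemma weakTendsto_add_norm {a b : ℕ → H₀} (ha : WeakTendsto a 0)
    (hb : Tendsto (fun k => ‖b k‖) atTop (nhds 0)) :
    WeakTendsto (fun k => a k + b k) 0 := by
  intro y
  simp only [sub_zero]
  have h1 := ha y; simp only [sub_zero] at h1
  have h2 : Tendsto (fun k => (inner ℂ (b k) y : ℂ)) atTop (nhds 0) := by
    apply squeeze_zero_norm (fun k => norm_inner_le_norm (b k) y)
    simpa using hb.mul_const ‖y‖
  have := h1.add h2
  simp only [add_zero] at this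
  convert this using 1
  funext k; rw [inner_add_left]

lemma resolvent_bound {Hsp dom : Submodule ℂ H₀} {T : H₀ →ₗ[ℂ] H₀} {lam lam0 : ℂ}
    {R P : H₀ →L[ℂ] H₀} (hR : InResolvent Hsp dom T lam0 R) (hP : IsOrthProj Hsp P)
    (hdom : dom ≤ Hsp) (u : H₀) :
    R u ∈ dom ∧ ‖T (R u) - lam • R u‖ ≤ ‖u - (lam - lam0) • R u‖ := by
  obtain ⟨hR1, hR2, hR3⟩ := hR
  have hdecomp : R u = R (P u) := by
    have h0 : R (u - P u) = 0 := hR3 _ (hP u).2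
    rw [map_sub] at h0
    exact (sub_eq_zero.1 h0)
  obtain ⟨hmem, heq⟩ := hR1 (P u) (hP u).1
  rw [← hdecomp] at hmem heq
  refine ⟨hmem, ?_⟩
  have hTy : T (R u) - lam • R u = P (u - (lam - lam0) • R u) := by
    have hPRu : P (R u) = R u := orthProj_eq_self hP (hdom hmem)
    rw [map_sub, map_smul, hPRu, ← heq, sub_smul]
    abel
  rw [hTy]; exact orthProj_norm_le hP _

lemma norm_tendsto_of_sub {u y : ℕ → H₀} {b : ℂ} (hb : b ≠ 0)
    (hu : ∀ k, ‖u k‖ = 1)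
    (hd : Tendsto (fun k => ‖u k - b • y k‖) atTop (nhds 0)) :
    Tendsto (fun k => ‖y k‖) atTop (nhds ‖b‖⁻¹) := by
  have h1 : Tendsto (fun k => ‖b • y k‖) atTop (nhds 1) := by
    rw [tendsto_iff_norm_sub_tendsto_zero]
    apply squeeze_zero (fun k => norm_nonneg _) _ hd
    intro k
    calc ‖‖b • y k‖ - 1‖ = |‖b • y k‖ - ‖u k‖| := by rw [hu k, Real.norm_eq_abs]
      _ ≤ ‖b • y k - u k‖ := abs_norm_sub_norm_le _ _
      _ = ‖u k - b • y k‖ := norm_sub_rev _ _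
  have h2 : (fun k => ‖y k‖) = fun k => ‖b‖⁻¹ * ‖b • y k‖ := by
    funext k; rw [norm_smul, ← mul_assoc, inv_mul_cancel₀ (norm_ne_zero_iff.2 hb), one_mul]
  rw [h2]
  simpa using h1.const_mul ‖b‖⁻¹

lemma normalize_seq (D : ℕ → Submodule ℂ H₀) (S : ℕ → H₀ →ₗ[ℂ] H₀) (lam : ℂ)
    (y : ℕ → H₀) (hmem : ∀ k, y k ∈ D k) (c : ℝ) (hc : 0 < c)
    (hnorm : Tendsto (fun k => ‖y k‖) atTop (nhds c))
    (hweak : WeakTendsto y 0)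
    (hS : Tendsto (fun k => ‖S k (y k) - lam • y k‖) atTop (nhds 0)) :
    ∃ (K : ℕ) (z : ℕ → H₀), (∀ k, z k ∈ D (k + K)) ∧ (∀ k, ‖z k‖ = 1) ∧
      WeakTendsto z 0 ∧ Tendsto (fun k => ‖S (k + K) (z k) - lam • z k‖) atTop (nhds 0) := by
  obtain ⟨K, hK⟩ := eventually_atTop.1 (hnorm.eventually (eventually_gt_nhds (by linarith : c/2 < c)))
  set a : ℕ → ℂ := fun k => ((‖y (k + K)‖⁻¹ : ℝ) : ℂ) with ha
  set z : ℕ → H₀ := fun k => a k • y (k + K) with hz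
  have hyK : ∀ k, (0:ℝ) < ‖y (k + K)‖ := fun k => lt_trans (by linarith) (hK (k+K) (by omega))
  have hmemz : ∀ k, z k ∈ D (k + K) := fun k => Submodule.smul_mem _ _ (hmem (k+K))
  have hz1 : ∀ k, ‖z k‖ = 1 := by
    intro k
    have h := (hyK k).ne'
    simp [hz, ha, norm_smul, abs_of_nonneg (inv_nonneg.2 (norm_nonneg (y (k+K)))),
      inv_mul_cancel₀ h]
  have hnt : Tendsto (fun k => ‖y (k + K)‖) atTop (nhds c) := by
    have := hnorm.comp (tendsto_add_atTop_nat K)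
    simpa [Function.comp_def] using this
  have halim : Tendsto a atTop (nhds ((c⁻¹ : ℝ) : ℂ)) :=
    (Complex.continuous_ofReal.tendsto _).comp (hnt.inv₀ hc.ne')
  have hzw : WeakTendsto z 0 := by
    intro w
    simp only [sub_zero, hz, inner_smul_left]
    have h1 : Tendsto (fun k => (starRingEnd ℂ) (a k)) atTop
        (nhds ((starRingEnd ℂ) ((c⁻¹ : ℝ) : ℂ))) := (Complex.continuous_conj.tendsto _).comp halim
    have h2 : Tendsto (fun k => (inner ℂ (y (k + K)) w : ℂ)) atTop (nhds 0) := by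
      have := (hweak w).comp (tendsto_add_atTop_nat K)
      simpa [Function.comp_def] using this
    simpa using h1.mul h2
  have hkey : ∀ k, S (k + K) (z k) - lam • z k = a k • (S (k+K) (y (k+K)) - lam • y (k+K)) := by
    intro k
    show S (k+K) (a k • y (k+K)) - lam • (a k • y (k+K)) = _
    rw [map_smul, smul_comm lam (a k), ← smul_sub]
  have hSt : Tendsto (fun k => ‖S (k + K) (y (k + K)) - lam • y (k + K)‖) atTop (nhds 0) := by
    have := hS.comp (tendsto_add_atTop_nat K)
    simpa [Function.comp_def] using this
  have hzS : Tendsto (fun k => ‖S (k + K) (z k) - lam • z k‖) atTop (nhds 0) := by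
    simp only [hkey, norm_smul]
    simpa using halim.norm.mul hSt
  exact ⟨K, z, hmemz, hz1, hzw, hzS⟩


theorem stmt3 [TopologicalSpace.SeparableSpace H₀]
    (Hsp dom : Submodule ℂ H₀) (T : H₀ →ₗ[ℂ] H₀)
    (hHcl : IsClosed ((Hsp : Set H₀)))
    (hT : ActsIn Hsp dom T) (hTcl : IsClosedOp dom T)
    (Hn domn : ℕ → Submodule ℂ H₀) (Tn : ℕ → H₀ →ₗ[ℂ] H₀)
    (hHncl : ∀ n, IsClosed ((Hn n : Set H₀)))
    (hTn : ∀ n, ActsIn (Hn n) (domn n) (Tn n))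
    (hTncl : ∀ n, IsClosedOp (domn n) (Tn n))
    (P : H₀ →L[ℂ] H₀) (Pn : ℕ → H₀ →L[ℂ] H₀)
    (hP : IsOrthProj Hsp P) (hPn : ∀ n, IsOrthProj (Hn n) (Pn n))
    (hPconv : ∀ y : H₀, Tendsto (fun n => Pn n y) atTop (nhds (P y)))
    (hconv : GNRConv Hsp dom T Hn domn Tn) :
    {lam : ℂ | LimEssSpectrum domn Tn lam} = {lam : ℂ | EssSpectrum dom T lam} := by
  obtain ⟨n₀, lam0, R, Rn, hR, hRn, hRd⟩ := hconv
  ext lam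
  simp only [Set.mem_setOf_eq]
  constructor
  · rintro ⟨φ, x, hφ, hxmem, hx1, hxw, hxT⟩
    obtain ⟨N₁, hN₁⟩ := eventually_atTop.1 (hRd.eventually (eventually_le_nhds zero_lt_one))
    have hRnb : ∀ n, N₁ ≤ n → ‖Rn n‖ ≤ ‖R‖ + 1 := by
      intro n hn
      have heq : Rn n = R + (Rn n - R) := by abel
      calc ‖Rn n‖ = ‖R + (Rn n - R)‖ := by rw [← heq]
        _ ≤ ‖R‖ + ‖Rn n - R‖ := norm_add_le _ _
        _ ≤ ‖R‖ + 1 := by linarith [hN₁ n hn]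
    set M := max n₀ N₁ with hM
    have hφge : ∀ k, k ≤ φ k := fun k => hφ.le_apply
    by_cases hlam : lam = lam0
    · exfalso
      subst hlam
      have hzero : Tendsto (fun k => ‖x k‖) atTop (nhds 0) := by
        apply squeeze_zero' (Eventually.of_forall fun k => norm_nonneg _) _
          (by simpa using hxT.const_mul (‖R‖ + 1))
        filter_upwards [eventually_ge_atTop M] with k hk
        have hkM : M ≤ φ k := le_trans hk (hφge k)
        obtain ⟨h1, h2, h3⟩ := hRn (φ k) (le_trans (le_max_left _ _) hkM)
        have hinv : Rn (φ k) (Tn (φ k) (x k) - lam • x k) = x k := h2 (x k) (hxmem k)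
        calc ‖x k‖ = ‖Rn (φ k) (Tn (φ k) (x k) - lam • x k)‖ := by rw [hinv]
          _ ≤ ‖Rn (φ k)‖ * ‖Tn (φ k) (x k) - lam • x k‖ := (Rn (φ k)).le_opNorm _
          _ ≤ (‖R‖ + 1) * ‖Tn (φ k) (x k) - lam • x k‖ :=
            mul_le_mul_of_nonneg_right (hRnb _ (le_trans (le_max_right _ _) hkM))
              (norm_nonneg _)
      have hone : Tendsto (fun k => ‖x k‖) atTop (nhds 1) := by
        have : (fun k => ‖x k‖) = fun _ => (1:ℝ) := funext hx1
        rw [this]; exact tendsto_const_nhds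
      exact one_ne_zero (tendsto_nhds_unique hone hzero)
    · set b := lam - lam0 with hb
      have hbne : b ≠ 0 := sub_ne_zero.2 hlam
      set u : ℕ → H₀ := fun k => x (k + M) with hu
      set ψ : ℕ → ℕ := fun k => φ (k + M) with hψ
      have hψM : ∀ k, M ≤ ψ k := fun k => le_trans (by omega) (hφge (k + M))
      have humem : ∀ k, u k ∈ domn (ψ k) := fun k => hxmem (k + M)
      have hu1 : ∀ k, ‖u k‖ = 1 := fun k => hx1 (k + M)
      have huT : Tendsto (fun k => ‖Tn (ψ k) (u k) - lam • u k‖) atTop (nhds 0) := by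
        have := hxT.comp (tendsto_add_atTop_nat M)
        simpa [Function.comp_def] using this
      have huw : WeakTendsto u 0 := fun w => (hxw w).comp (tendsto_add_atTop_nat M)
      have hstep : ∀ k, ‖u k - b • (R (u k))‖ ≤
          (‖R‖ + 1) * ‖Tn (ψ k) (u k) - lam • u k‖ + ‖b‖ * ‖Rn (ψ k) - R‖ := by
        intro k
        obtain ⟨h1, h2, h3⟩ := hRn (ψ k) (le_trans (le_max_left _ _) (hψM k))
        have hinv : Rn (ψ k) (Tn (ψ k) (u k) - lam0 • u k) = u k := h2 (u k) (humem k)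
        have hsplit : Tn (ψ k) (u k) - lam0 • u k = (Tn (ψ k) (u k) - lam • u k) + b • u k := by
          rw [hb, sub_smul]; abel
        have h4' : Rn (ψ k) (Tn (ψ k) (u k) - lam • u k) + b • Rn (ψ k) (u k) = u k := by
          rw [← map_smul, ← map_add, ← hsplit, hinv]
        have h4 : u k - b • (Rn (ψ k) (u k)) = Rn (ψ k) (Tn (ψ k) (u k) - lam • u k) :=
          sub_eq_iff_eq_add.2 h4'.symm
        have h5 : u k - b • R (u k) =
            (u k - b • Rn (ψ k) (u k)) + b • ((Rn (ψ k) - R) (u k)) := by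
          simp only [ContinuousLinearMap.sub_apply, smul_sub]
          abel
        rw [h5]
        refine le_trans (norm_add_le _ _) (add_le_add ?_ ?_)
        · rw [h4]
          calc ‖Rn (ψ k) (Tn (ψ k) (u k) - lam • u k)‖
              ≤ ‖Rn (ψ k)‖ * ‖Tn (ψ k) (u k) - lam • u k‖ := (Rn (ψ k)).le_opNorm _
            _ ≤ (‖R‖ + 1) * ‖Tn (ψ k) (u k) - lam • u k‖ :=
              mul_le_mul_of_nonneg_right
                (hRnb _ (le_trans (le_max_right _ _) (hψM k))) (norm_nonneg _)
        · rw [norm_smul]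
          refine mul_le_mul_of_nonneg_left ?_ (norm_nonneg b)
          calc ‖(Rn (ψ k) - R) (u k)‖ ≤ ‖Rn (ψ k) - R‖ * ‖u k‖ := (Rn (ψ k) - R).le_opNorm _
            _ = ‖Rn (ψ k) - R‖ := by rw [hu1 k, mul_one]
      have hRψ : Tendsto (fun k => ‖Rn (ψ k) - R‖) atTop (nhds 0) := by
        have := hRd.comp (hφ.tendsto_atTop.comp (tendsto_add_atTop_nat M))
        simpa [Function.comp_def] using this
      have hd : Tendsto (fun k => ‖u k - b • (R (u k))‖) atTop (nhds 0) := by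
        apply squeeze_zero (fun k => norm_nonneg _) hstep
        simpa using (huT.const_mul (‖R‖ + 1)).add (hRψ.const_mul ‖b‖)
      have hAy := fun k => resolvent_bound (lam := lam) hR hP hT.1 (u k)
      have hTy : Tendsto (fun k => ‖T (R (u k)) - lam • R (u k)‖) atTop (nhds 0) :=
        squeeze_zero (fun k => norm_nonneg _) (fun k => (hAy k).2) hd
      have hynorm : Tendsto (fun k => ‖R (u k)‖) atTop (nhds ‖b‖⁻¹) :=
        norm_tendsto_of_sub hbne hu1 hd
      have hyweak : WeakTendsto (fun k => R (u k)) 0 := weakTendsto_clm R huw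
      obtain ⟨K, z, hz1, hz2, hz3, hz4⟩ := normalize_seq (fun _ => dom) (fun _ => T) lam
        (fun k => R (u k)) (fun k => (hAy k).1) ‖b‖⁻¹ (inv_pos.2 (norm_pos_iff.2 hbne))
        hynorm hyweak hTy
      exact ⟨z, hz1, hz2, hz3, hz4⟩
  · rintro ⟨x, hxmem, hx1, hxw, hxT⟩
    by_cases hlam : lam = lam0
    · exfalso
      subst hlam
      have hzero : Tendsto (fun k => ‖x k‖) atTop (nhds 0) := by
        apply squeeze_zero (fun k => norm_nonneg _) _ (by simpa using hxT.const_mul ‖R‖)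
        intro k
        have hinv : R (T (x k) - lam • x k) = x k := hR.2.1 (x k) (hxmem k)
        calc ‖x k‖ = ‖R (T (x k) - lam • x k)‖ := by rw [hinv]
          _ ≤ ‖R‖ * ‖T (x k) - lam • x k‖ := R.le_opNorm _
      have hone : Tendsto (fun k => ‖x k‖) atTop (nhds 1) := by
        have : (fun k => ‖x k‖) = fun _ => (1:ℝ) := funext hx1
        rw [this]; exact tendsto_const_nhds
      exact one_ne_zero (tendsto_nhds_unique hone hzero)
    · set b := lam - lam0 with hb
      have hbne : b ≠ 0 := sub_ne_zero.2 hlam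
      set y : ℕ → H₀ := fun k => Rn (k + n₀) (x k) with hy
      have hstep : ∀ k, ‖x k - b • y k‖ ≤
          ‖R‖ * ‖T (x k) - lam • x k‖ + ‖b‖ * ‖Rn (k + n₀) - R‖ := by
        intro k
        have hinv : R (T (x k) - lam0 • x k) = x k := hR.2.1 (x k) (hxmem k)
        have hsplit : T (x k) - lam0 • x k = (T (x k) - lam • x k) + b • x k := by
          rw [hb, sub_smul]; abel
        have h4' : R (T (x k) - lam • x k) + b • R (x k) = x k := by
          rw [← map_smul, ← map_add, ← hsplit, hinv]
        have h4 : x k - b • (R (x k)) = R (T (x k) - lam • x k) :=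
          sub_eq_iff_eq_add.2 h4'.symm
        have h5 : x k - b • y k =
            (x k - b • R (x k)) - b • ((Rn (k + n₀) - R) (x k)) := by
          simp only [hy, ContinuousLinearMap.sub_apply, smul_sub]
          abel
        rw [h5]
        refine le_trans (norm_sub_le _ _) (add_le_add ?_ ?_)
        · rw [h4]; exact R.le_opNorm _
        · rw [norm_smul]
          refine mul_le_mul_of_nonneg_left ?_ (norm_nonneg b)
          calc ‖(Rn (k + n₀) - R) (x k)‖ ≤ ‖Rn (k + n₀) - R‖ * ‖x k‖ :=
              (Rn (k + n₀) - R).le_opNorm _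
            _ = ‖Rn (k + n₀) - R‖ := by rw [hx1 k, mul_one]
      have hRψ : Tendsto (fun k => ‖Rn (k + n₀) - R‖) atTop (nhds 0) := by
        have := hRd.comp (tendsto_add_atTop_nat n₀)
        simpa [Function.comp_def] using this
      have hd : Tendsto (fun k => ‖x k - b • y k‖) atTop (nhds 0) := by
        apply squeeze_zero (fun k => norm_nonneg _) hstep
        simpa using (hxT.const_mul ‖R‖).add (hRψ.const_mul ‖b‖)
      have hAy := fun k => resolvent_bound (lam := lam) (hRn (k + n₀) (by omega))
        (hPn (k + n₀)) (hTn (k + n₀)).1 (x k)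
      have hTy : Tendsto (fun k => ‖Tn (k + n₀) (y k) - lam • y k‖) atTop (nhds 0) :=
        squeeze_zero (fun k => norm_nonneg _) (fun k => (hAy k).2) hd
      have hynorm : Tendsto (fun k => ‖y k‖) atTop (nhds ‖b‖⁻¹) :=
        norm_tendsto_of_sub hbne hx1 hd
      have hyweak : WeakTendsto y 0 := by
        have heq : y = fun k => R (x k) + ((Rn (k + n₀) - R) (x k)) := by
          funext k
          show Rn (k + n₀) (x k) = R (x k) + ((Rn (k + n₀) - R) (x k))
          rw [ContinuousLinearMap.sub_apply]; abel
        rw [heq]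
        apply weakTendsto_add_norm (weakTendsto_clm R hxw)
        apply squeeze_zero (fun k => norm_nonneg _) _ hRψ
        intro k
        calc ‖(Rn (k + n₀) - R) (x k)‖ ≤ ‖Rn (k + n₀) - R‖ * ‖x k‖ :=
            (Rn (k + n₀) - R).le_opNorm _
          _ = ‖Rn (k + n₀) - R‖ := by rw [hx1 k, mul_one]
      obtain ⟨K, z, hz1, hz2, hz3, hz4⟩ := normalize_seq (fun k => domn (k + n₀))
        (fun k => Tn (k + n₀)) lam y (fun k => (hAy k).1) ‖b‖⁻¹
        (inv_pos.2 (norm_pos_iff.2 hbne)) hynorm hyweak hTy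
      refine ⟨fun k => k + K + n₀, z, ?_, hz1, hz2, hz3, hz4⟩
      intro a c h
      dsimp only
      omega


end
end

section
/- Let B_n ∈ L(H_n) and B_0 ∈ L(H_0) with B_n* P_n → B_0* strongly. Suppose x_n ∈ H_n, n ∈ I, converge weakly to x ∈ H_0. Then x ∈ H, B_n x_n converges weakly to B_0 x, and B_0 x ∈ H. If moreover the sequence (B_n) is discretely compact, then B_n x_n converges to B_0 x in norm. -/
open Filter Topology

noncomputable section

variable {H₀ : Type} [NormedAddCommGroup H₀] [InnerProductSpace ℂ H₀] [CompleteSpace H₀]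

section MyHelpers

local notation "⟪" a ", " b "⟫" => (inner ℂ a b : ℂ)

lemma myOrthProj_comm {Hsp : Submodule ℂ H₀} {P : H₀ →L[ℂ] H₀} (hP : IsOrthProj Hsp P)
    (a b : H₀) : ⟪P a, b⟫ = ⟪a, P b⟫ := by
  have h1 : ⟪P a, b - P b⟫ = 0 :=
    (Submodule.mem_orthogonal _ _).1 (hP b).2 (P a) (hP a).1
  have h2 : ⟪P b, a - P a⟫ = 0 :=
    (Submodule.mem_orthogonal _ _).1 (hP a).2 (P b) (hP b).1
  have h2' : ⟪a - P a, P b⟫ = 0 := inner_eq_zero_symm.1 h2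
  have e1 : ⟪P a, b⟫ = ⟪P a, P b⟫ := by
    have := inner_sub_right (𝕜 := ℂ) (P a) b (P b)
    rw [h1] at this; linear_combination -this
  have e2 : ⟪a, P b⟫ = ⟪P a, P b⟫ := by
    have := inner_sub_left (𝕜 := ℂ) a (P a) (P b)
    rw [h2'] at this; linear_combination -this
  rw [e1, e2]

lemma myOrthProj_fix {Hsp : Submodule ℂ H₀} {P : H₀ →L[ℂ] H₀} (hP : IsOrthProj Hsp P)
    {a : H₀} (ha : a ∈ Hsp) : P a = a := by
  have hm : a - P a ∈ Hsp := Submodule.sub_mem _ ha (hP a).1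
  have h0 : ⟪a - P a, a - P a⟫ = 0 :=
    (Submodule.mem_orthogonal _ _).1 (hP a).2 (a - P a) hm
  have := inner_self_eq_zero.1 h0
  exact (sub_eq_zero.1 this).symm

lemma myOrthProj_zero {Hsp : Submodule ℂ H₀} {P : H₀ →L[ℂ] H₀} (hP : IsOrthProj Hsp P)
    {z : H₀} (hz : z ∈ Hspᗮ) : P z = 0 := by
  have h1 : ⟪P z, z⟫ = 0 := (Submodule.mem_orthogonal _ _).1 hz (P z) (hP z).1
  have h2 : ⟪P z, z - P z⟫ = 0 :=
    (Submodule.mem_orthogonal _ _).1 (hP z).2 (P z) (hP z).1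
  have h3 : ⟪P z, P z⟫ = 0 := by
    have := inner_sub_right (𝕜 := ℂ) (P z) z (P z)
    rw [h1, h2] at this; linear_combination this
  exact inner_self_eq_zero.1 h3

lemma myWeak_bdd {x : ℕ → H₀} {xl : H₀} (hw : WeakTendsto x xl) :
    ∃ C : ℝ, ∀ k, ‖x k‖ ≤ C := by
  have hpt : ∀ y : H₀, ∃ C, ∀ k, ‖(innerSL ℂ (x k)) y‖ ≤ C := by
    intro y
    have h1 : Tendsto (fun k => ⟪x k, y⟫) atTop (nhds (0 + ⟪xl, y⟫)) := by
      have := (hw y).add_const ⟪xl, y⟫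
      simpa [inner_sub_left, sub_add_cancel] using this
    have h2 := (h1.norm).bddAbove_range
    obtain ⟨C, hC⟩ := h2
    exact ⟨C, fun k => hC ⟨k, rfl⟩⟩
  obtain ⟨C', hC'⟩ := banach_steinhaus hpt
  exact ⟨C', fun k => by simpa [innerSL_apply_norm] using hC' k⟩

lemma myInner_tendsto_zero {u : ℕ → H₀} {C : ℝ} (hu : ∀ k, ‖u k‖ ≤ C)
    {v : ℕ → H₀} (hv : Tendsto v atTop (nhds 0)) :
    Tendsto (fun k => ⟪u k, v k⟫) atTop (nhds 0) := by
  have hC0 : 0 ≤ C := le_trans (norm_nonneg _) (hu 0)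
  apply squeeze_zero_norm (a := fun k => C * ‖v k‖)
  · intro k
    calc ‖⟪u k, v k⟫‖ ≤ ‖u k‖ * ‖v k‖ := norm_inner_le_norm _ _
      _ ≤ C * ‖v k‖ := mul_le_mul_of_nonneg_right (hu k) (norm_nonneg _)
  · have := hv.norm
    simpa using (tendsto_const_nhds (x := C)).mul this

end MyHelpers

theorem stmt5 [TopologicalSpace.SeparableSpace H₀]
    (Hsp : Submodule ℂ H₀) (Hn : ℕ → Submodule ℂ H₀)
    (hHcl : IsClosed ((Hsp : Set H₀))) (hHncl : ∀ n, IsClosed ((Hn n : Set H₀)))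
    (P : H₀ →L[ℂ] H₀) (Pn : ℕ → H₀ →L[ℂ] H₀)
    (hP : IsOrthProj Hsp P) (hPn : ∀ n, IsOrthProj (Hn n) (Pn n))
    (hPconv : ∀ y : H₀, Tendsto (fun n => Pn n y) atTop (nhds (P y)))
    (B : ℕ → H₀ →L[ℂ] H₀) (B₀ : H₀ →L[ℂ] H₀)
    (hB : ∀ n, ∀ x ∈ Hn n, B n x ∈ Hn n)
    (hBadj : ∀ y : H₀, Tendsto (fun n => (ContinuousLinearMap.adjoint (B n)) (Pn n y)) atTop
      (nhds ((ContinuousLinearMap.adjoint B₀) y)))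
    (φ : ℕ → ℕ) (hφ : StrictMono φ) (x : ℕ → H₀) (xl : H₀)
    (hx : ∀ k, x k ∈ Hn (φ k)) (hw : WeakTendsto x xl) :
    xl ∈ Hsp ∧ B₀ xl ∈ Hsp ∧ WeakTendsto (fun k => B (φ k) (x k)) (B₀ xl) ∧
      (DiscretelyCompact Hsp Hn B →
        Tendsto (fun k => B (φ k) (x k)) atTop (nhds (B₀ xl))) := by
  haveI : CompleteSpace Hsp := hHcl.completeSpace_coe
  obtain ⟨C, hC⟩ := myWeak_bdd hw
  have hxP : ∀ k, Pn (φ k) (x k) = x k := fun k => myOrthProj_fix (hPn (φ k)) (hx k)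
  have memHsp : ∀ v : H₀, (∀ z ∈ Hspᗮ, (inner ℂ v z : ℂ) = 0) → v ∈ Hsp := by
    intro v hv
    rw [← Submodule.orthogonal_orthogonal Hsp, Submodule.mem_orthogonal]
    intro u hu
    exact inner_eq_zero_symm.1 (hv u hu)
  -- projection differences tend to zero along φ
  have hPdiff : ∀ y : H₀, Tendsto (fun k => Pn (φ k) y - P y) atTop (nhds 0) := by
    intro y
    have := ((hPconv y).comp hφ.tendsto_atTop).sub_const (P y)
    simpa using this
  -- xl ∈ Hsp
  have hxlmem : xl ∈ Hsp := by
    apply memHsp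
    intro z hz
    have h1 : Tendsto (fun k => (inner ℂ (x k) z : ℂ)) atTop (nhds (0 + inner ℂ xl z)) := by
      have := (hw z).add_const (inner ℂ xl z : ℂ)
      simpa [inner_sub_left, sub_add_cancel] using this
    have h2 : Tendsto (fun k => (inner ℂ (x k) z : ℂ)) atTop (nhds 0) := by
      have hPz : P z = 0 := myOrthProj_zero hP hz
      have he : ∀ k, (inner ℂ (x k) z : ℂ) = inner ℂ (x k) (Pn (φ k) z - P z) := by
        intro k
        rw [hPz, sub_zero]
        conv_lhs => rw [← hxP k]
        rw [myOrthProj_comm (hPn (φ k))]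
      simp only [he]
      exact myInner_tendsto_zero hC (hPdiff z)
    have := tendsto_nhds_unique h1 h2
    rw [zero_add] at this
    exact this
  -- key: inner ℂ products of images converge
  have key : ∀ y : H₀, Tendsto (fun k => (inner ℂ (B (φ k) (x k)) y : ℂ)) atTop
      (nhds (inner ℂ (B₀ xl) y)) := by
    intro y
    have e : ∀ k, (inner ℂ (B (φ k) (x k)) y : ℂ)
        = inner ℂ (x k) ((ContinuousLinearMap.adjoint (B (φ k))) (Pn (φ k) y)) := by
      intro k
      rw [ContinuousLinearMap.adjoint_inner_right]
      conv_lhs => rw [← myOrthProj_fix (hPn (φ k)) (hB (φ k) _ (hx k))]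
      rw [myOrthProj_comm (hPn (φ k))]
    simp only [e]
    have split : ∀ k, (inner ℂ (x k) ((ContinuousLinearMap.adjoint (B (φ k))) (Pn (φ k) y)) : ℂ)
        = inner ℂ (x k) ((ContinuousLinearMap.adjoint (B (φ k))) (Pn (φ k) y)
            - (ContinuousLinearMap.adjoint B₀) y)
          + inner ℂ (x k - xl) ((ContinuousLinearMap.adjoint B₀) y)
          + inner ℂ xl ((ContinuousLinearMap.adjoint B₀) y) := by
      intro k
      rw [inner_sub_right, inner_sub_left]
      ring
    simp only [split]
    have t1 : Tendsto (fun k => (inner ℂ (x k) ((ContinuousLinearMap.adjoint (B (φ k))) (Pn (φ k) y)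
        - (ContinuousLinearMap.adjoint B₀) y) : ℂ)) atTop (nhds 0) := by
      apply myInner_tendsto_zero hC
      have := ((hBadj y).comp hφ.tendsto_atTop).sub_const ((ContinuousLinearMap.adjoint B₀) y)
      simpa using this
    have t2 := hw ((ContinuousLinearMap.adjoint B₀) y)
    have t3 : Tendsto (fun _ : ℕ => (inner ℂ xl ((ContinuousLinearMap.adjoint B₀) y) : ℂ)) atTop
        (nhds (inner ℂ xl ((ContinuousLinearMap.adjoint B₀) y))) := tendsto_const_nhds
    have := (t1.add t2).add t3
    have hval := ContinuousLinearMap.adjoint_inner_right B₀ xl y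
    simpa [hval] using this
  -- weak convergence of images
  have hwB : WeakTendsto (fun k => B (φ k) (x k)) (B₀ xl) := by
    intro y
    have := (key y).sub_const (inner ℂ (B₀ xl) y : ℂ)
    simpa [inner_sub_left, sub_self] using this
  obtain ⟨C2, hC2⟩ := myWeak_bdd hwB
  -- B₀ xl ∈ Hsp
  have hBmem : B₀ xl ∈ Hsp := by
    apply memHsp
    intro z hz
    have h1 := key z
    have h2 : Tendsto (fun k => (inner ℂ (B (φ k) (x k)) z : ℂ)) atTop (nhds 0) := by
      have hPz : P z = 0 := myOrthProj_zero hP hz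
      have he : ∀ k, (inner ℂ (B (φ k) (x k)) z : ℂ)
          = inner ℂ (B (φ k) (x k)) (Pn (φ k) z - P z) := by
        intro k
        rw [hPz, sub_zero]
        conv_lhs => rw [← myOrthProj_fix (hPn (φ k)) (hB (φ k) _ (hx k))]
        rw [myOrthProj_comm (hPn (φ k))]
      simp only [he]
      exact myInner_tendsto_zero hC2 (hPdiff z)
    exact tendsto_nhds_unique h1 h2
  refine ⟨hxlmem, hBmem, hwB, ?_⟩
  -- norm convergence under discrete compactness
  intro hDC
  by_contra hnot
  rw [Metric.tendsto_atTop] at hnot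
  push_neg at hnot
  obtain ⟨ε, hε, hfreq⟩ := hnot
  obtain ⟨σ, hσ, hσP⟩ := extraction_of_frequently_atTop (P := fun n =>
      ε ≤ dist (B (φ n) (x n)) (B₀ xl)) (Filter.frequently_atTop'.2 <| by
    intro N
    obtain ⟨n, hn, h⟩ := hfreq (N + 1)
    exact ⟨n, by omega, h⟩)
  obtain ⟨ψ, z, hψ, hzH, hzt⟩ := hDC (φ ∘ σ) (x ∘ σ) (hφ.comp hσ)
    (fun k => hx (σ k)) ⟨C, fun k => hC (σ k)⟩
  have hzeq : z = B₀ xl := by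
    have hsub : ∀ y : H₀, Tendsto (fun k => (inner ℂ (B (φ (σ (ψ k))) (x (σ (ψ k)))) y : ℂ))
        atTop (nhds (inner ℂ (B₀ xl) y)) := fun y =>
      (key y).comp ((hσ.comp hψ).tendsto_atTop)
    have hz2 : ∀ y : H₀, Tendsto (fun k => (inner ℂ (B (φ (σ (ψ k))) (x (σ (ψ k)))) y : ℂ))
        atTop (nhds (inner ℂ z y)) := fun y => hzt.inner tendsto_const_nhds
    have hzero : ∀ y : H₀, (inner ℂ (z - B₀ xl) y : ℂ) = 0 := by
      intro y
      rw [inner_sub_left, tendsto_nhds_unique (hz2 y) (hsub y), sub_self]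
    have := hzero (z - B₀ xl)
    exact sub_eq_zero.1 (inner_self_eq_zero.1 this)
  rw [hzeq] at hzt
  have hd : Tendsto (fun k => dist (B (φ (σ (ψ k))) (x (σ (ψ k)))) (B₀ xl)) atTop (nhds 0) :=
    tendsto_iff_dist_tendsto_zero.1 hzt
  have := (hd.eventually (eventually_lt_nhds hε)).exists
  obtain ⟨k, hk⟩ := this
  exact absurd (hσP (ψ k)) (not_le.2 hk)

end
end

section
/- If there exists λ_0 ∈ ⋂_n ρ(T_n) such that the resolvents ((T_n − λ_0)^{-1}) form a discretely compact sequence and ((T_n* − conj(λ_0))^{-1} P_n) converges strongly, then the limiting essential spectrum of (T_n) is empty. -/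
open Filter Topology

noncomputable section

variable {H₀ : Type} [NormedAddCommGroup H₀] [InnerProductSpace ℂ H₀] [CompleteSpace H₀]

theorem stmt7 [TopologicalSpace.SeparableSpace H₀]
    (Hsp : Submodule ℂ H₀)
    (hHcl : IsClosed ((Hsp : Set H₀)))
    (Hn domn : ℕ → Submodule ℂ H₀) (Tn : ℕ → H₀ →ₗ[ℂ] H₀)
    (hHncl : ∀ n, IsClosed ((Hn n : Set H₀)))
    (hTn : ∀ n, ActsIn (Hn n) (domn n) (Tn n))
    (hTncl : ∀ n, IsClosedOp (domn n) (Tn n))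
    (P : H₀ →L[ℂ] H₀) (Pn : ℕ → H₀ →L[ℂ] H₀)
    (hP : IsOrthProj Hsp P) (hPn : ∀ n, IsOrthProj (Hn n) (Pn n))
    (hPconv : ∀ y : H₀, Tendsto (fun n => Pn n y) atTop (nhds (P y)))
    (lam₀ : ℂ) (Rn : ℕ → H₀ →L[ℂ] H₀)
    (hres : ∀ n, InResolvent (Hn n) (domn n) (Tn n) lam₀ (Rn n))
    (hdc : DiscretelyCompact Hsp Hn Rn)
    (hadj : StrongConvSeq (fun n => (ContinuousLinearMap.adjoint (Rn n)).comp (Pn n))) :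
    {lam : ℂ | LimEssSpectrum domn Tn lam} = ∅ := by
  ext lam
  simp only [Set.mem_setOf_eq, Set.mem_empty_iff_false, iff_false]
  rintro ⟨φ, x, hφ, hdom, hnorm, hweak, htend⟩
  set y : ℕ → H₀ := fun k => Tn (φ k) (x k) - lam₀ • x k with hy
  have hyHn : ∀ k, y k ∈ Hn (φ k) := fun k =>
    Submodule.sub_mem _ ((hTn (φ k)).2.2 _ (hdom k))
      (Submodule.smul_mem _ _ ((hTn (φ k)).1 (hdom k)))
  have hRx : ∀ k, Rn (φ k) (y k) = x k := fun k => (hres (φ k)).2.1 _ (hdom k)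
  have hbd : ∃ C : ℝ, ∀ k, ‖y k‖ ≤ C := by
    obtain ⟨C, hC⟩ : BddAbove (Set.range fun k => ‖Tn (φ k) (x k) - lam • x k‖) :=
      htend.bddAbove_range
    refine ⟨C + ‖lam - lam₀‖, fun k => ?_⟩
    have h1 : ‖Tn (φ k) (x k) - lam • x k‖ ≤ C := hC ⟨k, rfl⟩
    have h2 : y k = (Tn (φ k) (x k) - lam • x k) + (lam - lam₀) • x k := by
      simp [hy, sub_smul]
    calc ‖y k‖ ≤ ‖Tn (φ k) (x k) - lam • x k‖ + ‖(lam - lam₀) • x k‖ := by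
          rw [h2]; exact norm_add_le _ _
      _ ≤ C + ‖lam - lam₀‖ := by
          rw [norm_smul, hnorm k, mul_one]; exact add_le_add h1 le_rfl
  obtain ⟨ψ, z, hψ, hz, htendz⟩ := hdc φ y hφ hyHn hbd
  have htendx : Tendsto (fun k => x (ψ k)) atTop (nhds z) := by
    simpa only [hRx] using htendz
  have hz0 : z = 0 := by
    have h1 : Tendsto (fun k => (inner ℂ (x (ψ k)) z : ℂ)) atTop (nhds (inner ℂ z z)) :=
      htendx.inner tendsto_const_nhds
    have h2 : Tendsto (fun k => (inner ℂ (x (ψ k)) z : ℂ)) atTop (nhds 0) := by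
      have := (hweak z).comp hψ.tendsto_atTop
      simpa [Function.comp_def] using this
    have : (inner ℂ z z : ℂ) = 0 := tendsto_nhds_unique h1 h2
    exact inner_self_eq_zero.mp this
  have hnz : ‖z‖ = 1 := by
    have h1 : Tendsto (fun k => ‖x (ψ k)‖) atTop (nhds ‖z‖) := htendx.norm
    have h2 : Tendsto (fun k => ‖x (ψ k)‖) atTop (nhds 1) := by
      simpa [hnorm] using tendsto_const_nhds (α := ℝ) (f := atTop (α := ℕ)) (a := 1)
    exact tendsto_nhds_unique h1 h2
  rw [hz0, norm_zero] at hnz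
  exact one_ne_zero hnz.symm

end
end

section
/- Let B_n ∈ L(H_n) be a discretely compact sequence with (B_n* P_n) strongly convergent. Then the limiting essential spectrum of (T_n + B_n) equals the limiting essential spectrum of (T_n). -/
open Filter Topology

noncomputable section

variable {H₀ : Type} [NormedAddCommGroup H₀] [InnerProductSpace ℂ H₀] [CompleteSpace H₀]

section Aux

variable {H₀ : Type} [NormedAddCommGroup H₀] [InnerProductSpace ℂ H₀] [CompleteSpace H₀]

lemma orthProj_fix {Hsp : Submodule ℂ H₀} {P : H₀ →L[ℂ] H₀} (hP : IsOrthProj Hsp P)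
    {v : H₀} (hv : v ∈ Hsp) : P v = v := by
  have h1 : v - P v ∈ Hspᗮ := (hP v).2
  have h2 : v - P v ∈ Hsp := Submodule.sub_mem _ hv (hP v).1
  have h3 : (inner ℂ (v - P v) (v - P v) : ℂ) = 0 :=
    (Submodule.mem_orthogonal _ _).mp h1 _ h2
  have := inner_self_eq_zero.mp h3
  rw [sub_eq_zero] at this
  exact this.symm

lemma orthProj_symm {Hsp : Submodule ℂ H₀} {P : H₀ →L[ℂ] H₀} (hP : IsOrthProj Hsp P)
    (a b : H₀) : (inner ℂ (P a) b : ℂ) = inner ℂ a (P b) := by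
  have ha : (inner ℂ (P a) (b - P b) : ℂ) = 0 :=
    (Submodule.mem_orthogonal _ _).mp (hP b).2 _ (hP a).1
  have hb : (inner ℂ (a - P a) (P b) : ℂ) = 0 := by
    have := (Submodule.mem_orthogonal' _ _).mp (hP a).2 _ (hP b).1
    exact this
  have h1 : (inner ℂ (P a) b : ℂ) = inner ℂ (P a) (P b) := by
    have := inner_sub_right (𝕜 := ℂ) (P a) b (P b)
    rw [ha] at this
    exact sub_eq_zero.mp this.symm
  have h2 : (inner ℂ a (P b) : ℂ) = inner ℂ (P a) (P b) := by
    have := inner_sub_left (𝕜 := ℂ) a (P a) (P b)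
    rw [hb] at this
    exact sub_eq_zero.mp this.symm
  rw [h1, h2]

lemma key_Bto0 (Hsp : Submodule ℂ H₀) (Hn : ℕ → Submodule ℂ H₀)
    (Pn : ℕ → H₀ →L[ℂ] H₀) (hPn : ∀ n, IsOrthProj (Hn n) (Pn n))
    (B : ℕ → H₀ →L[ℂ] H₀) (hB : ∀ n, ∀ x ∈ Hn n, B n x ∈ Hn n)
    (hdc : DiscretelyCompact Hsp Hn B)
    (hadj : StrongConvSeq (fun n => (ContinuousLinearMap.adjoint (B n)).comp (Pn n)))
    (φ : ℕ → ℕ) (x : ℕ → H₀) (hφ : StrictMono φ) (hx : ∀ k, x k ∈ Hn (φ k))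
    (hnorm : ∀ k, ‖x k‖ = 1) (hw : WeakTendsto x 0) :
    Tendsto (fun k => B (φ k) (x k)) atTop (nhds 0) := by
  obtain ⟨A₀, hA₀⟩ := hadj
  -- weak convergence of B (φ k) (x k) to 0
  have hweak : ∀ y : H₀, Tendsto (fun k => (inner ℂ (B (φ k) (x k)) y : ℂ)) atTop (nhds 0) := by
    intro y
    have hid : ∀ k, (inner ℂ (B (φ k) (x k)) y : ℂ) =
        inner ℂ (x k) (((ContinuousLinearMap.adjoint (B (φ k))).comp (Pn (φ k))) y) := by
      intro k
      have hfix : Pn (φ k) (B (φ k) (x k)) = B (φ k) (x k) :=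
        orthProj_fix (hPn (φ k)) (hB _ _ (hx k))
      calc (inner ℂ (B (φ k) (x k)) y : ℂ)
          = inner ℂ (Pn (φ k) (B (φ k) (x k))) y := by rw [hfix]
        _ = inner ℂ (B (φ k) (x k)) (Pn (φ k) y) := orthProj_symm (hPn (φ k)) _ _
        _ = inner ℂ (x k) ((ContinuousLinearMap.adjoint (B (φ k))) (Pn (φ k) y)) :=
            (ContinuousLinearMap.adjoint_inner_right _ _ _).symm
        _ = _ := rfl
    have h1 : Tendsto (fun k => (inner ℂ (x k) (A₀ y) : ℂ)) atTop (nhds 0) := by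
      have := hw (A₀ y)
      simpa using this
    have h2 : Tendsto (fun k =>
        (inner ℂ (x k) (((ContinuousLinearMap.adjoint (B (φ k))).comp (Pn (φ k))) y - A₀ y) : ℂ))
        atTop (nhds 0) := by
      have hgt : Tendsto (fun k =>
          ‖((ContinuousLinearMap.adjoint (B (φ k))).comp (Pn (φ k))) y - A₀ y‖)
          atTop (nhds 0) := by
        have h5 := ((hA₀ y).comp hφ.tendsto_atTop).sub_const (A₀ y)
        simp only [sub_self] at h5
        exact tendsto_zero_iff_norm_tendsto_zero.mp h5
      refine squeeze_zero_norm (fun k => ?_) hgt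
      calc ‖(inner ℂ (x k) (((ContinuousLinearMap.adjoint (B (φ k))).comp (Pn (φ k))) y - A₀ y) : ℂ)‖
          ≤ ‖x k‖ * ‖((ContinuousLinearMap.adjoint (B (φ k))).comp (Pn (φ k))) y - A₀ y‖ :=
            norm_inner_le_norm _ _
        _ = _ := by rw [hnorm k, one_mul]
    have h3 := h1.add h2
    simp only [add_zero] at h3
    have h4 : (fun k => (inner ℂ (B (φ k) (x k)) y : ℂ)) = fun k =>
        (inner ℂ (x k) (A₀ y) : ℂ) +
        inner ℂ (x k) (((ContinuousLinearMap.adjoint (B (φ k))).comp (Pn (φ k))) y - A₀ y) := by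
      funext k
      rw [hid k, ← inner_add_right]
      congr 1
      abel
    rw [h4]
    exact h3
  -- now conclude norm convergence via discrete compactness
  apply Filter.tendsto_of_subseq_tendsto
  intro ns hns
  obtain ⟨ms, hms, hcomp⟩ := strictMono_subseq_of_tendsto_atTop hns
  obtain ⟨ψ, z, hψ, hz, hzt⟩ := hdc (φ ∘ ns ∘ ms) (x ∘ ns ∘ ms)
    (hφ.comp hcomp) (fun k => hx _) ⟨1, fun k => le_of_eq (hnorm _)⟩
  have hz0 : z = 0 := by
    have hinner : ∀ y : H₀, (inner ℂ z y : ℂ) = 0 := by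
      intro y
      have l1 : Tendsto (fun k => (inner ℂ (B (φ (ns (ms (ψ k)))) (x (ns (ms (ψ k))))) y : ℂ))
          atTop (nhds (inner ℂ z y)) := by
        exact (hzt.inner tendsto_const_nhds)
      have l2 : Tendsto (fun k => (inner ℂ (B (φ (ns (ms (ψ k)))) (x (ns (ms (ψ k))))) y : ℂ))
          atTop (nhds 0) :=
        (hweak y).comp ((hns.comp hms.tendsto_atTop).comp hψ.tendsto_atTop)
      exact tendsto_nhds_unique l1 l2
    exact inner_self_eq_zero.mp (hinner z)
  exact ⟨fun k => ms (ψ k), by rw [hz0] at hzt; exact hzt⟩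

end Aux


theorem stmt8 [TopologicalSpace.SeparableSpace H₀]
    (Hsp : Submodule ℂ H₀)
    (hHcl : IsClosed ((Hsp : Set H₀)))
    (Hn domn : ℕ → Submodule ℂ H₀) (Tn : ℕ → H₀ →ₗ[ℂ] H₀)
    (hHncl : ∀ n, IsClosed ((Hn n : Set H₀)))
    (hTn : ∀ n, ActsIn (Hn n) (domn n) (Tn n))
    (hTncl : ∀ n, IsClosedOp (domn n) (Tn n))
    (P : H₀ →L[ℂ] H₀) (Pn : ℕ → H₀ →L[ℂ] H₀)
    (hP : IsOrthProj Hsp P) (hPn : ∀ n, IsOrthProj (Hn n) (Pn n))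
    (hPconv : ∀ y : H₀, Tendsto (fun n => Pn n y) atTop (nhds (P y)))
    (B : ℕ → H₀ →L[ℂ] H₀)
    (hB : ∀ n, ∀ x ∈ Hn n, B n x ∈ Hn n)
    (hdc : DiscretelyCompact Hsp Hn B)
    (hadj : StrongConvSeq (fun n => (ContinuousLinearMap.adjoint (B n)).comp (Pn n))) :
    {lam : ℂ | LimEssSpectrum domn (fun n => Tn n + (B n : H₀ →ₗ[ℂ] H₀)) lam}
      = {lam : ℂ | LimEssSpectrum domn Tn lam} := by
  ext lam
  simp only [Set.mem_setOf_eq]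
  constructor
  · rintro ⟨φ, x, hφ, hdom, hnorm, hw, ht⟩
    refine ⟨φ, x, hφ, hdom, hnorm, hw, ?_⟩
    have hxHn : ∀ k, x k ∈ Hn (φ k) := fun k => (hTn (φ k)).1 (hdom k)
    have hB0 := key_Bto0 Hsp Hn Pn hPn B hB hdc hadj φ x hφ hxHn hnorm hw
    have h1 : Tendsto (fun k => (Tn (φ k) + (B (φ k) : H₀ →ₗ[ℂ] H₀)) (x k) - lam • x k)
        atTop (nhds 0) := tendsto_zero_iff_norm_tendsto_zero.mpr ht
    have h2 : Tendsto (fun k => Tn (φ k) (x k) - lam • x k) atTop (nhds 0) := by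
      have h3 := h1.sub hB0
      simp only [sub_zero] at h3
      have h4 : (fun k => Tn (φ k) (x k) - lam • x k) = fun k =>
          ((Tn (φ k) + (B (φ k) : H₀ →ₗ[ℂ] H₀)) (x k) - lam • x k) - B (φ k) (x k) := by
        funext k
        simp only [LinearMap.add_apply, ContinuousLinearMap.coe_coe]
        abel
      rw [h4]
      exact h3
    exact tendsto_zero_iff_norm_tendsto_zero.mp h2
  · rintro ⟨φ, x, hφ, hdom, hnorm, hw, ht⟩
    refine ⟨φ, x, hφ, hdom, hnorm, hw, ?_⟩
    have hxHn : ∀ k, x k ∈ Hn (φ k) := fun k => (hTn (φ k)).1 (hdom k)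
    have hB0 := key_Bto0 Hsp Hn Pn hPn B hB hdc hadj φ x hφ hxHn hnorm hw
    have h1 : Tendsto (fun k => Tn (φ k) (x k) - lam • x k) atTop (nhds 0) :=
      tendsto_zero_iff_norm_tendsto_zero.mpr ht
    have h2 : Tendsto (fun k => (Tn (φ k) + (B (φ k) : H₀ →ₗ[ℂ] H₀)) (x k) - lam • x k)
        atTop (nhds 0) := by
      have h3 := h1.add hB0
      simp only [add_zero] at h3
      have h4 : (fun k => (Tn (φ k) + (B (φ k) : H₀ →ₗ[ℂ] H₀)) (x k) - lam • x k) = fun k =>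
          (Tn (φ k) (x k) - lam • x k) + B (φ k) (x k) := by
        funext k
        simp only [LinearMap.add_apply, ContinuousLinearMap.coe_coe]
        abel
      rw [h4]
      exact h3
    exact tendsto_zero_iff_norm_tendsto_zero.mp h2


end
end

section
/- If T_n converges to T in generalised strong resolvent sense, then the approximate point spectrum of T is contained in the limiting approximate point spectrum of (T_n). -/
open Filter Topology

noncomputable section

variable {H₀ : Type} [NormedAddCommGroup H₀] [InnerProductSpace ℂ H₀] [CompleteSpace H₀]

theorem stmt10 [TopologicalSpace.SeparableSpace H₀]
    (Hsp dom : Submodule ℂ H₀) (T : H₀ →ₗ[ℂ] H₀)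
    (hHcl : IsClosed ((Hsp : Set H₀)))
    (hT : ActsIn Hsp dom T) (hTcl : IsClosedOp dom T)
    (Hn domn : ℕ → Submodule ℂ H₀) (Tn : ℕ → H₀ →ₗ[ℂ] H₀)
    (hHncl : ∀ n, IsClosed ((Hn n : Set H₀)))
    (hTn : ∀ n, ActsIn (Hn n) (domn n) (Tn n))
    (hTncl : ∀ n, IsClosedOp (domn n) (Tn n))
    (P : H₀ →L[ℂ] H₀) (Pn : ℕ → H₀ →L[ℂ] H₀)
    (hP : IsOrthProj Hsp P) (hPn : ∀ n, IsOrthProj (Hn n) (Pn n))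
    (hPconv : ∀ y : H₀, Tendsto (fun n => Pn n y) atTop (nhds (P y)))
    (hconv : GSRConv Hsp dom T Hn domn Tn) (lam : ℂ)
    (hlam : ApproxSpectrum dom T lam) :
    LimApproxSpectrum domn Tn lam := by
  obtain ⟨x, hxdom, hxnorm, hxlim⟩ := hlam
  obtain ⟨n₀, lam₀, R, Rn, hR, hRn, hRconv⟩ := hconv
  set y : ℕ → H₀ := fun k => T (x k) - lam₀ • x k with hy
  have hyHsp : ∀ k, y k ∈ Hsp := fun k =>
    Hsp.sub_mem (hT.2.2 _ (hxdom k)) (Hsp.smul_mem _ (hT.1 (hxdom k)))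
  have hRy : ∀ k, R (y k) = x k := fun k => hR.2.1 _ (hxdom k)
  have hPy : ∀ k, P (y k) = y k := by
    intro k
    have h1 := (hP (y k)).1
    have h2 := (hP (y k)).2
    have hmem : y k - P (y k) ∈ Hsp := Hsp.sub_mem (hyHsp k) h1
    have hz : y k - P (y k) = 0 := by
      have h0 := (Submodule.mem_orthogonal _ _).mp h2 _ hmem
      exact inner_self_eq_zero.mp h0
    have := sub_eq_zero.mp hz
    exact this.symm
  have key : ∀ k, ∀ n, n ≥ n₀ → Rn n (y k) ∈ domn n ∧
      Tn n (Rn n (y k)) - lam₀ • Rn n (y k) = Pn n (y k) := by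
    intro k n hn
    obtain ⟨h1, h2, h3⟩ := hRn n hn
    have horth : Rn n (y k - Pn n (y k)) = 0 := h3 _ ((hPn n (y k)).2)
    have heq : Rn n (y k) = Rn n (Pn n (y k)) := by
      have h0 : Rn n (y k) - Rn n (Pn n (y k)) = 0 := by
        rw [← map_sub]; exact horth
      exact sub_eq_zero.mp h0
    obtain ⟨hd, he⟩ := h1 (Pn n (y k)) (hPn n (y k)).1
    rw [heq]; exact ⟨hd, he⟩
  have hev : ∀ k : ℕ, ∃ N : ℕ, ∀ n, n ≥ N → n ≥ n₀ ∧
      ‖Rn n (y k) - x k‖ < 1 / ((k : ℝ) + 2) ∧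
      ‖Pn n (y k) + (lam₀ - lam) • Rn n (y k) - (T (x k) - lam • x k)‖ <
        1 / ((k : ℝ) + 2) := by
    intro k
    have h1 : Tendsto (fun n => Rn n (y k)) atTop (nhds (x k)) := by
      have := hRconv (y k); rwa [hRy k] at this
    have h2 : Tendsto (fun n => Pn n (y k) + (lam₀ - lam) • Rn n (y k)) atTop
        (nhds (T (x k) - lam • x k)) := by
      have h3 := hPconv (y k); rw [hPy k] at h3
      have h4 := h3.add (h1.const_smul (lam₀ - lam))
      have heq : y k + (lam₀ - lam) • x k = T (x k) - lam • x k := by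
        simp only [hy]; module
      rwa [heq] at h4
    have hε : (0:ℝ) < 1 / ((k : ℝ) + 2) := by positivity
    obtain ⟨N1, hN1⟩ := (Metric.tendsto_atTop.mp h1) _ hε
    obtain ⟨N2, hN2⟩ := (Metric.tendsto_atTop.mp h2) _ hε
    refine ⟨max n₀ (max N1 N2), fun n hn => ⟨le_trans (le_max_left _ _) hn, ?_, ?_⟩⟩
    · have := hN1 n (le_trans (le_trans (le_max_left _ _) (le_max_right _ _)) hn)
      rwa [dist_eq_norm] at this
    · have := hN2 n (le_trans (le_trans (le_max_right _ _) (le_max_right _ _)) hn)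
      rwa [dist_eq_norm] at this
  choose N hN using hev
  let φ : ℕ → ℕ := fun k => Nat.rec (N 0) (fun m ih => max (N (m+1)) (ih+1)) k
  have hφmono : StrictMono φ :=
    strictMono_nat_of_lt_succ (fun k =>
      lt_of_lt_of_le (Nat.lt_succ_self _) (le_max_right _ _))
  have hφN : ∀ k, φ k ≥ N k := by
    intro k; cases k with
    | zero => exact le_refl _
    | succ m => exact le_max_left _ _
  have hprop : ∀ k, φ k ≥ n₀ ∧ ‖Rn (φ k) (y k) - x k‖ < 1 / ((k : ℝ) + 2) ∧
      ‖Pn (φ k) (y k) + (lam₀ - lam) • Rn (φ k) (y k) - (T (x k) - lam • x k)‖ <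
        1 / ((k : ℝ) + 2) := fun k => hN k (φ k) (hφN k)
  set u : ℕ → H₀ := fun k => Rn (φ k) (y k) with hu
  have hsmall : ∀ k : ℕ, 1 / ((k : ℝ) + 2) ≤ 1 / 2 := by
    intro k
    apply one_div_le_one_div_of_le
    · norm_num
    · have : (0:ℝ) ≤ (k:ℝ) := Nat.cast_nonneg k
      linarith
  have hunorm : ∀ k, (1:ℝ)/2 ≤ ‖u k‖ := by
    intro k
    have h1 : ‖x k‖ ≤ ‖u k‖ + ‖u k - x k‖ := by
      calc ‖x k‖ = ‖u k - (u k - x k)‖ := congrArg norm (by abel)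
        _ ≤ ‖u k‖ + ‖u k - x k‖ := norm_sub_le _ _
    have h2 := (hprop k).2.1
    have h3 := hsmall k
    rw [hxnorm k] at h1
    linarith
  have hune : ∀ k, ‖u k‖ ≠ 0 := fun k => by
    have := hunorm k; positivity
  set z : ℕ → H₀ := fun k => ((‖u k‖ : ℂ))⁻¹ • u k with hz
  refine ⟨φ, z, hφmono, ?_, ?_, ?_⟩
  · intro k
    exact Submodule.smul_mem _ _ (key k (φ k) (hprop k).1).1
  · intro k
    simp only [hz, norm_smul, norm_inv, Complex.norm_real, Real.norm_eq_abs,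
      abs_of_nonneg (norm_nonneg (u k))]
    exact inv_mul_cancel₀ (hune k)
  · have hbound : ∀ k, ‖Tn (φ k) (z k) - lam • z k‖ ≤
        2 * (‖T (x k) - lam • x k‖ + 1 / ((k : ℝ) + 2)) := by
      intro k
      have heq1 : Tn (φ k) (z k) - lam • z k =
          ((‖u k‖ : ℂ))⁻¹ • (Tn (φ k) (u k) - lam • u k) := by
        simp only [hz, map_smul, smul_sub, smul_comm lam]
      have heq2 : Tn (φ k) (u k) - lam • u k =
          Pn (φ k) (y k) + (lam₀ - lam) • u k := by
        have := (key k (φ k) (hprop k).1).2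
        have h' : Tn (φ k) (u k) = Pn (φ k) (y k) + lam₀ • u k := by
          rw [← this]; abel
        rw [h']; module
      have h2 := (hprop k).2.2
      have h3 : ‖Tn (φ k) (u k) - lam • u k‖ ≤
          ‖T (x k) - lam • x k‖ + 1 / ((k : ℝ) + 2) := by
        rw [heq2]
        have : ‖Pn (φ k) (y k) + (lam₀ - lam) • u k‖ ≤
            ‖T (x k) - lam • x k‖ +
              ‖Pn (φ k) (y k) + (lam₀ - lam) • u k - (T (x k) - lam • x k)‖ := by
          calc ‖Pn (φ k) (y k) + (lam₀ - lam) • u k‖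
              = ‖T (x k) - lam • x k +
                  (Pn (φ k) (y k) + (lam₀ - lam) • u k - (T (x k) - lam • x k))‖ :=
                congrArg norm (by abel)
            _ ≤ _ := norm_add_le _ _
        linarith
      have hinv : ‖((‖u k‖ : ℂ))⁻¹‖ ≤ 2 := by
        rw [norm_inv, Complex.norm_real, Real.norm_eq_abs, abs_of_nonneg (norm_nonneg (u k))]
        rw [inv_le_comm₀ (lt_of_lt_of_le (by norm_num) (hunorm k)) (by norm_num)]
        have := hunorm k; linarith
      calc ‖Tn (φ k) (z k) - lam • z k‖
          = ‖((‖u k‖ : ℂ))⁻¹‖ * ‖Tn (φ k) (u k) - lam • u k‖ := by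
            rw [heq1, norm_smul]
        _ ≤ 2 * (‖T (x k) - lam • x k‖ + 1 / ((k : ℝ) + 2)) := by
            apply mul_le_mul hinv h3 (norm_nonneg _)
            norm_num
    have hlim2 : Tendsto (fun k : ℕ => 1 / ((k : ℝ) + 2)) atTop (nhds 0) := by
      simp only [one_div]
      exact tendsto_inv_atTop_zero.comp
        (tendsto_atTop_add_const_right _ 2 tendsto_natCast_atTop_atTop)
    have hlimb : Tendsto (fun k => 2 * (‖T (x k) - lam • x k‖ + 1 / ((k : ℝ) + 2)))
        atTop (nhds 0) := by
      have := (hxlim.add hlim2).const_mul (2:ℝ)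
      simpa using this
    exact squeeze_zero (fun k => norm_nonneg _) hbound hlimb

end
end
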